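/- arXiv:2601.18178 — 4 statements merged into one kernel-verified Lean document; each statement's English description precedes it below -/
import Mathlib

section
/- Assume that the joint distribution function F of the i.i.d. sample is continuous on [0,∞)^d. Let m(n) = (m_1(n),…,m_d(n)) be smoothing vectors with m_min(n) = min_j m_j(n) → ∞ as n → ∞. Then for every L > 0, sup_{x ∈ [0,L]^d} |F_{m(n),n}(x) − F(x)| → 0 almost surely as n → ∞; consequently, F_{m(n),n} converges to F almost surely, uniformly on compact subsets of [0,∞)^d. -/
open MeasureTheory ProbabilityTheory Filter Real

/-- Partial derivative `∂_{x_j} F(x)`. -/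
noncomputable def pd {d : ℕ} (F : (Fin d → ℝ) → ℝ) (j : Fin d) (x : Fin d → ℝ) : ℝ :=
  deriv (fun t => F (Function.update x j t)) (x j)

/-- Second partial derivative `∂²_{x_i x_j} F(x)`. -/
noncomputable def pd2 {d : ℕ} (F : (Fin d → ℝ) → ℝ) (i j : Fin d) (x : Fin d → ℝ) : ℝ :=
  pd (pd F j) i x

/-- Product-Poisson weights `P_{k,m}(x) = ∏_j e^{-m_j x_j} (m_j x_j)^{k_j} / k_j!`. -/
noncomputable def poissonWeight {d : ℕ} (m : Fin d → ℕ) (k : Fin d → ℕ) (x : Fin d → ℝ) : ℝ :=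
  ∏ j, Real.exp (-(m j * x j)) * (m j * x j) ^ (k j) / Nat.factorial (k j)

/-- Szász–Mirakyan smoothing `F_m(x) = Σ_k F(k/m) P_{k,m}(x)`. -/
noncomputable def szasz {d : ℕ} (F : (Fin d → ℝ) → ℝ) (m : Fin d → ℕ) (x : Fin d → ℝ) : ℝ :=
  ∑' k : Fin d → ℕ, F (fun j => (k j : ℝ) / (m j : ℝ)) * poissonWeight m k x

/-- The open positive orthant `(0,∞)^d`. -/
def posOrthant (d : ℕ) : Set (Fin d → ℝ) := {x | ∀ j, 0 < x j}

/-- ℓ¹-neighbourhood of `S` inside the positive orthant. -/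
def l1Nbhd {d : ℕ} (S : Set (Fin d → ℝ)) (δ : ℝ) : Set (Fin d → ℝ) :=
  {y | (∀ j, 0 < y j) ∧ ∃ z ∈ S, ∑ j, |y j - z j| ≤ δ}

/-- Assumption (A1): `F` is C² on `(0,∞)^d`, with first and second partial derivatives
bounded on an ℓ¹-neighbourhood of each compact `S ⊂ (0,∞)^d`. -/
def A1 {d : ℕ} (F : (Fin d → ℝ) → ℝ) : Prop :=
  ContDiffOn ℝ 2 F (posOrthant d) ∧
  ∀ S : Set (Fin d → ℝ), IsCompact S → S ⊆ posOrthant d →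
    ∃ δ > 0, ∃ M : ℝ, ∀ y ∈ l1Nbhd S δ,
      (∀ i, |pd F i y| ≤ M) ∧ (∀ i j, |pd2 F i j y| ≤ M)

/-- `m_min = min_j m_j`. -/
noncomputable def mmin {d : ℕ} (m : Fin d → ℕ) : ℕ := ⨅ j, m j

/-- Empirical distribution function `F_n(x) = n⁻¹ Σ_{i<n} 1{X_i ≤ x}`. -/
noncomputable def ecdf {d : ℕ} {Ω : Type*} (n : ℕ) (X : ℕ → Ω → Fin d → ℝ)
    (ω : Ω) (x : Fin d → ℝ) : ℝ :=
  (n : ℝ)⁻¹ * ∑ i ∈ Finset.range n, if ∀ j, X i ω j ≤ x j then (1 : ℝ) else 0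

/-- Szász–Mirakyan estimator `F_{m,n}(x)`. -/
noncomputable def szaszEst {d : ℕ} {Ω : Type*} (m : Fin d → ℕ) (n : ℕ)
    (X : ℕ → Ω → Fin d → ℝ) (ω : Ω) (x : Fin d → ℝ) : ℝ :=
  szasz (ecdf n X ω) m x

/-- `X_0, X_1, …` are i.i.d. random vectors in `[0,∞)^d` with joint c.d.f. `F`. -/
def IsIIDwithCDF {d : ℕ} {Ω : Type*} [MeasurableSpace Ω] (μ : Measure Ω)
    (X : ℕ → Ω → Fin d → ℝ) (F : (Fin d → ℝ) → ℝ) : Prop :=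
  (∀ i, Measurable (X i)) ∧
  iIndepFun X μ ∧
  (∀ i, IdentDistrib (X i) (X 0) μ μ) ∧
  (∀ i ω j, 0 ≤ X i ω j) ∧
  (∀ x, F x = (μ {ω | ∀ j, X 0 ω j ≤ x j}).toReal)

section Helpers
open Topology
noncomputable def pw (lam : ℝ) (a : ℕ) : ℝ := Real.exp (-lam) * lam ^ a / (Nat.factorial a : ℝ)

lemma pw_nonneg {lam : ℝ} (h : 0 ≤ lam) (a : ℕ) : 0 ≤ pw lam a := by
  unfold pw; positivity

lemma hasSum_pw {lam : ℝ} (h : 0 ≤ lam) : HasSum (pw lam) 1 := by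
  have := ProbabilityTheory.poissonPMFRealSum ⟨lam, h⟩
  exact this

lemma hasSum_pw_m1 {lam : ℝ} (h : 0 ≤ lam) :
    HasSum (fun a : ℕ => (a : ℝ) * pw lam a) lam := by
  refine (hasSum_nat_add_iff' 1).mp ?_
  have h1 : (fun n : ℕ => ((n + 1 : ℕ) : ℝ) * pw lam (n + 1)) = fun n => lam * pw lam n := by
    funext n
    have hn : ((n : ℝ) + 1) ≠ 0 := by positivity
    simp only [pw, Nat.factorial_succ, Nat.cast_mul, Nat.cast_add, Nat.cast_one, pow_succ]
    field_simp
  have h2 : (lam - ∑ i ∈ Finset.range 1, (i : ℝ) * pw lam i) = lam * 1 := by simp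
  rw [h2, h1]
  exact (hasSum_pw h).mul_left lam

lemma hasSum_pw_m2 {lam : ℝ} (h : 0 ≤ lam) :
    HasSum (fun a : ℕ => (a : ℝ) * ((a : ℝ) - 1) * pw lam a) (lam ^ 2) := by
  refine (hasSum_nat_add_iff' 2).mp ?_
  have h1 : (fun n : ℕ => ((n + 2 : ℕ) : ℝ) * (((n + 2 : ℕ) : ℝ) - 1) * pw lam (n + 2))
      = fun n => lam ^ 2 * pw lam n := by
    funext n
    have hn1 : ((n : ℝ) + 1) ≠ 0 := by positivity
    have hn2 : ((n : ℝ) + 2) ≠ 0 := by positivity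
    simp only [pw, Nat.factorial_succ, Nat.cast_mul, Nat.cast_add, Nat.cast_one,
      Nat.cast_ofNat, pow_succ]
    field_simp
    ring
  have h2 : (lam ^ 2 - ∑ i ∈ Finset.range 2, (i : ℝ) * ((i : ℝ) - 1) * pw lam i)
      = lam ^ 2 * 1 := by
    simp [Finset.sum_range_succ]
  rw [h2, h1]
  exact (hasSum_pw h).mul_left (lam ^ 2)

lemma hasSum_pw_center {lam : ℝ} (h : 0 ≤ lam) :
    HasSum (fun a : ℕ => ((a : ℝ) - lam) ^ 2 * pw lam a) lam := by
  have H := (hasSum_pw_m2 h).add (((hasSum_pw_m1 h).mul_left (1 - 2 * lam)).add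
    ((hasSum_pw h).mul_left (lam ^ 2)))
  have hfun : (fun a : ℕ => ((a : ℝ) - lam) ^ 2 * pw lam a)
      = fun a : ℕ => (a : ℝ) * ((a : ℝ) - 1) * pw lam a +
        ((1 - 2 * lam) * ((a : ℝ) * pw lam a) + lam ^ 2 * pw lam a) := by
    funext a; ring
  rw [hfun]
  convert H using 1
  ring

lemma hasSum_pw_cheb {x : ℝ} (hx : 0 ≤ x) {m : ℕ} (hm : 0 < m) :
    HasSum (fun a : ℕ => ((a : ℝ) / (m : ℝ) - x) ^ 2 * pw ((m : ℝ) * x) a)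
      (x / (m : ℝ)) := by
  have hm0 : (m : ℝ) ≠ 0 := Nat.cast_ne_zero.mpr hm.ne'
  have H := (hasSum_pw_center (by positivity : (0:ℝ) ≤ (m : ℝ) * x)).mul_left (((m : ℝ) ^ 2)⁻¹)
  have hfun : (fun a : ℕ => (((m : ℝ) ^ 2)⁻¹ * (((a : ℝ) - (m : ℝ) * x) ^ 2 * pw ((m : ℝ) * x) a)))
      = fun a : ℕ => ((a : ℝ) / (m : ℝ) - x) ^ 2 * pw ((m : ℝ) * x) a := by
    funext a
    field_simp
  have hval : ((m : ℝ) ^ 2)⁻¹ * ((m : ℝ) * x) = x / (m : ℝ) := by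
    field_simp
  rw [hfun, hval] at H
  exact H

lemma HasSum.mul_of_nonneg' {ι ι' : Type*} {f : ι → ℝ} {g : ι' → ℝ} {A B : ℝ}
    (hf : HasSum f A) (hg : HasSum g B) (h0f : ∀ i, 0 ≤ f i) (h0g : ∀ i, 0 ≤ g i) :
    HasSum (fun p : ι × ι' => f p.1 * g p.2) (A * B) := by
  have hfs := hf.summable
  have hgs := hg.summable
  have hsum : Summable fun p : ι × ι' => f p.1 * g p.2 :=
    hfs.mul_of_nonneg hgs h0f h0g
  have hnf : Summable fun i => ‖f i‖ := by
    have : (fun i => ‖f i‖) = f := funext fun i => Real.norm_of_nonneg (h0f i)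
    rw [this]; exact hfs
  have hng : Summable fun i => ‖g i‖ := by
    have : (fun i => ‖g i‖) = g := funext fun i => Real.norm_of_nonneg (h0g i)
    rw [this]; exact hgs
  have ht := tsum_mul_tsum_of_summable_norm hnf hng
  rw [hf.tsum_eq, hg.tsum_eq] at ht
  rw [ht]
  exact hsum.hasSum

lemma hasSum_pi_prod : ∀ {d : ℕ} (f : Fin d → ℕ → ℝ) (S : Fin d → ℝ),
    (∀ j a, 0 ≤ f j a) → (∀ j, HasSum (f j) (S j)) →
    HasSum (fun k : Fin d → ℕ => ∏ j, f j (k j)) (∏ j, S j) := by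
  intro d
  induction d with
  | zero =>
    intro f S _ _
    have h1 : HasSum (fun k : Fin 0 → ℕ => ∏ j, f j (k j))
        (∏ j, f j ((fun _ => 0 : Fin 0 → ℕ) j)) :=
      hasSum_single _ (fun b hb => absurd (Subsingleton.elim b _) hb)
    simpa using h1
  | succ d ih =>
    intro f S h0 hs
    have hg : HasSum (fun k : Fin d → ℕ => ∏ j, f j.succ (k j)) (∏ j : Fin d, S j.succ) :=
      ih _ _ (fun j a => h0 j.succ a) (fun j => hs j.succ)
    have hpair := HasSum.mul_of_nonneg' (hs 0) hg (h0 0)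
      (fun k => Finset.prod_nonneg fun j _ => h0 j.succ (k j))
    have e := Fin.consEquiv (fun _ : Fin (d + 1) => ℕ)
    rw [← Equiv.hasSum_iff (Fin.consEquiv (fun _ : Fin (d + 1) => ℕ))]
    have hcomp : ((fun k : Fin (d+1) → ℕ => ∏ j, f j (k j)) ∘
        (Fin.consEquiv (fun _ : Fin (d + 1) => ℕ)))
        = fun p : ℕ × (Fin d → ℕ) => f 0 p.1 * ∏ j, f j.succ (p.2 j) := by
      funext p
      simp [Fin.consEquiv, Fin.prod_univ_succ]
    rw [hcomp, Fin.prod_univ_succ]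
    exact hpair

section PW
variable {d : ℕ} {m : Fin d → ℕ} {x : Fin d → ℝ}

lemma poissonWeight_eq (k : Fin d → ℕ) :
    poissonWeight m k x = ∏ j, pw ((m j : ℝ) * x j) (k j) := rfl

lemma poissonWeight_nonneg (hx : ∀ j, 0 ≤ x j) (k : Fin d → ℕ) :
    0 ≤ poissonWeight m k x := by
  rw [poissonWeight_eq]
  exact Finset.prod_nonneg fun j _ => pw_nonneg (mul_nonneg (Nat.cast_nonneg _) (hx j)) _

lemma hasSum_poissonWeight (hx : ∀ j, 0 ≤ x j) :
    HasSum (fun k : Fin d → ℕ => poissonWeight m k x) 1 := by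
  have := hasSum_pi_prod (fun j => pw ((m j : ℝ) * x j)) (fun _ => 1)
    (fun j a => pw_nonneg (mul_nonneg (Nat.cast_nonneg _) (hx j)) a)
    (fun j => hasSum_pw (mul_nonneg (Nat.cast_nonneg _) (hx j)))
  simpa [poissonWeight_eq] using this

lemma hasSum_poissonWeight_coord (hx : ∀ j, 0 ≤ x j) (hm : ∀ j, 0 < m j) (j0 : Fin d) :
    HasSum (fun k : Fin d → ℕ =>
        ((k j0 : ℝ) / (m j0 : ℝ) - x j0) ^ 2 * poissonWeight m k x)
      (x j0 / (m j0 : ℝ)) := by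
  classical
  set f : Fin d → ℕ → ℝ := fun j a =>
    if j = j0 then ((a : ℝ) / (m j0 : ℝ) - x j0) ^ 2 * pw ((m j0 : ℝ) * x j0) a
    else pw ((m j : ℝ) * x j) a with hf
  set S : Fin d → ℝ := fun j => if j = j0 then x j0 / (m j0 : ℝ) else 1 with hS
  have h0 : ∀ j a, 0 ≤ f j a := by
    intro j a
    simp only [hf]
    split_ifs
    · exact mul_nonneg (sq_nonneg _) (pw_nonneg (mul_nonneg (Nat.cast_nonneg _) (hx j0)) a)
    · exact pw_nonneg (mul_nonneg (Nat.cast_nonneg _) (hx j)) a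
  have hsum : ∀ j, HasSum (f j) (S j) := by
    intro j
    by_cases h : j = j0
    · subst h
      simp only [hf, hS, if_pos rfl]
      exact hasSum_pw_cheb (hx j) (hm j)
    · simp only [hf, hS, if_neg h]
      exact hasSum_pw (mul_nonneg (Nat.cast_nonneg _) (hx j))
  have H := hasSum_pi_prod f S h0 hsum
  have hkey : ∀ k : Fin d → ℕ, ∏ j, f j (k j)
      = ((k j0 : ℝ) / (m j0 : ℝ) - x j0) ^ 2 * poissonWeight m k x := by
    intro k
    have e1 : ∀ j ∈ Finset.univ.erase j0, f j (k j) = pw ((m j : ℝ) * x j) (k j) :=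
      fun j hj => by simp only [hf, if_neg (Finset.ne_of_mem_erase hj)]
    rw [poissonWeight_eq]
    calc ∏ j, f j (k j)
        = (∏ j ∈ Finset.univ.erase j0, f j (k j)) * f j0 (k j0) :=
          (Finset.prod_erase_mul _ _ (Finset.mem_univ j0)).symm
      _ = (∏ j ∈ Finset.univ.erase j0, pw ((m j : ℝ) * x j) (k j)) *
          (((k j0 : ℝ) / (m j0 : ℝ) - x j0) ^ 2 * pw ((m j0 : ℝ) * x j0) (k j0)) := by
          rw [Finset.prod_congr rfl e1]
          simp only [hf, if_pos rfl]
      _ = ((k j0 : ℝ) / (m j0 : ℝ) - x j0) ^ 2 * ∏ j, pw ((m j : ℝ) * x j) (k j) := by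
          rw [← Finset.prod_erase_mul _ (fun j => pw ((m j : ℝ) * x j) (k j))
            (Finset.mem_univ j0)]
          ring
  have hval : (∏ j, S j) = x j0 / (m j0 : ℝ) := by
    rw [Finset.prod_eq_single j0 (fun b _ hb => by simp only [hS, if_neg hb])
      (fun h => absurd (Finset.mem_univ j0) h)]
    simp only [hS, if_pos rfl]
  rw [hval, funext hkey] at H
  exact H
end PW

lemma abs_tsum_le {ι : Type*} {f φ : ι → ℝ} (h : ∀ i, |f i| ≤ φ i) (hφ : Summable φ) :
    Summable f ∧ |∑' i, f i| ≤ ∑' i, φ i := by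
  have hn : Summable fun i => ‖f i‖ :=
    Summable.of_nonneg_of_le (fun i => norm_nonneg _)
      (fun i => by simpa [Real.norm_eq_abs] using h i) hφ
  refine ⟨hn.of_norm, ?_⟩
  calc |∑' i, f i| = ‖∑' i, f i‖ := (Real.norm_eq_abs _).symm
    _ ≤ ∑' i, ‖f i‖ := norm_tsum_le_tsum_norm hn
    _ ≤ ∑' i, φ i := Summable.tsum_le_tsum (fun i => by simpa [Real.norm_eq_abs] using h i) hn hφ

section SZ
variable {d : ℕ} {m : Fin d → ℕ} {x : Fin d → ℝ}

lemma summable_mul_pw {c : (Fin d → ℕ) → ℝ} {C : ℝ} (hx : ∀ j, 0 ≤ x j)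
    (hc : ∀ k, |c k| ≤ C) :
    Summable (fun k => c k * poissonWeight m k x) ∧
      |∑' k, c k * poissonWeight m k x| ≤ C := by
  have hP := hasSum_poissonWeight (m := m) hx
  have h : ∀ k, |c k * poissonWeight m k x| ≤ C * poissonWeight m k x := by
    intro k
    rw [abs_mul, abs_of_nonneg (poissonWeight_nonneg hx k)]
    exact mul_le_mul_of_nonneg_right (hc k) (poissonWeight_nonneg hx k)
  have := abs_tsum_le h (hP.summable.mul_left C)
  rwa [(hP.mul_left C).tsum_eq, mul_one] at this

lemma szasz_sub_szasz (hx : ∀ j, 0 ≤ x j) {G H : (Fin d → ℝ) → ℝ} {CG CH : ℝ}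
    (hG : ∀ k : Fin d → ℕ, |G (fun j => (k j : ℝ) / (m j : ℝ))| ≤ CG)
    (hH : ∀ k : Fin d → ℕ, |H (fun j => (k j : ℝ) / (m j : ℝ))| ≤ CH) :
    szasz G m x - szasz H m x =
      ∑' k : Fin d → ℕ, (G (fun j => (k j : ℝ) / (m j : ℝ)) -
        H (fun j => (k j : ℝ) / (m j : ℝ))) * poissonWeight m k x := by
  have sG := (summable_mul_pw (m := m) hx hG).1
  have sH := (summable_mul_pw (m := m) hx hH).1
  rw [szasz, szasz, ← Summable.tsum_sub sG sH]
  congr 1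
  funext k
  ring

lemma szasz_diff_bound (hx : ∀ j, 0 ≤ x j) {G H : (Fin d → ℝ) → ℝ} {CG CH η : ℝ}
    (hG : ∀ k : Fin d → ℕ, |G (fun j => (k j : ℝ) / (m j : ℝ))| ≤ CG)
    (hH : ∀ k : Fin d → ℕ, |H (fun j => (k j : ℝ) / (m j : ℝ))| ≤ CH)
    (hGH : ∀ k : Fin d → ℕ, |G (fun j => (k j : ℝ) / (m j : ℝ)) -
        H (fun j => (k j : ℝ) / (m j : ℝ))| ≤ η) :
    |szasz G m x - szasz H m x| ≤ η := by
  rw [szasz_sub_szasz hx hG hH]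
  exact (summable_mul_pw (m := m) hx hGH).2

lemma szasz_abs_le (hx : ∀ j, 0 ≤ x j) {G : (Fin d → ℝ) → ℝ} {C : ℝ}
    (hG : ∀ k : Fin d → ℕ, |G (fun j => (k j : ℝ) / (m j : ℝ))| ≤ C) :
    |szasz G m x| ≤ C :=
  (summable_mul_pw (m := m) hx hG).2

lemma szasz_sub_self (hx : ∀ j, 0 ≤ x j) {G : (Fin d → ℝ) → ℝ} {C : ℝ}
    (hG : ∀ k : Fin d → ℕ, |G (fun j => (k j : ℝ) / (m j : ℝ))| ≤ C) :
    szasz G m x - G x =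
      ∑' k : Fin d → ℕ, (G (fun j => (k j : ℝ) / (m j : ℝ)) - G x) * poissonWeight m k x := by
  have sG := (summable_mul_pw (m := m) hx hG).1
  have hP := hasSum_poissonWeight (m := m) hx
  have h2 : G x = ∑' k : Fin d → ℕ, G x * poissonWeight m k x := by
    rw [(hP.mul_left (G x)).tsum_eq, mul_one]
  rw [szasz]
  nth_rewrite 1 [h2]
  rw [← Summable.tsum_sub sG ((hP.mul_left (G x)).summable)]
  congr 1
  funext k
  ring
end SZ

/-- Part B: uniform approximation of `F` by its Szász smoothing on `[0,L]^d`. -/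
lemma szasz_approx {d : ℕ} (hd : 0 < d) (F : (Fin d → ℝ) → ℝ)
    (hF : ContinuousOn F {x : Fin d → ℝ | ∀ j, 0 ≤ x j})
    (hFb : ∀ y : Fin d → ℝ, (∀ j, 0 ≤ y j) → |F y| ≤ 1)
    {L ε : ℝ} (hL : 0 < L) (hε : 0 < ε) :
    ∃ N : ℕ, 0 < N ∧ ∀ m : Fin d → ℕ, (∀ j, 0 < m j) → (∀ j, N ≤ m j) →
      ∀ x ∈ Set.Icc (0 : Fin d → ℝ) (fun _ => L), |szasz F m x - F x| ≤ ε := by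
  -- uniform continuity on the compact box [0, L+1]^d
  set K : Set (Fin d → ℝ) := Set.Icc (0 : Fin d → ℝ) (fun _ => L + 1) with hK
  have hKsub : K ⊆ {x : Fin d → ℝ | ∀ j, 0 ≤ x j} := by
    intro z hz j
    exact (hz.1 : (0 : Fin d → ℝ) ≤ z) j
  have hKcpt : IsCompact K := isCompact_Icc
  have hFK : ContinuousOn F K := hF.mono hKsub
  have hUC := hKcpt.uniformContinuousOn_of_continuous hFK
  rw [Metric.uniformContinuousOn_iff] at hUC
  obtain ⟨δ, hδ, hδ'⟩ := hUC (ε / 2) (by positivity)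
  set δ0 : ℝ := min (δ / 2) 1 with hδ0def
  have hδ0 : 0 < δ0 := lt_min (by positivity) one_pos
  have hδ01 : δ0 ≤ 1 := min_le_right _ _
  have hδ0δ : δ0 < δ := lt_of_le_of_lt (min_le_left _ _) (by linarith)
  -- choose N
  set N : ℕ := ⌈4 * d * L / (δ0 ^ 2 * ε)⌉₊ + 1 with hNdef
  refine ⟨N, Nat.succ_pos _, ?_⟩
  intro m hm hmN x hxmem
  rw [Set.mem_Icc] at hxmem
  have hx0 : ∀ j, 0 ≤ x j := fun j => hxmem.1 j
  have hxL : ∀ j, x j ≤ L := fun j => hxmem.2 j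
  -- pointwise bound
  have hpt : ∀ k : Fin d → ℕ,
      |F (fun j => (k j : ℝ) / (m j : ℝ)) - F x| ≤
        ε / 2 + (2 / δ0 ^ 2) * ∑ j, ((k j : ℝ) / (m j : ℝ) - x j) ^ 2 := by
    intro k
    have hk0 : ∀ j, (0 : ℝ) ≤ (k j : ℝ) / (m j : ℝ) := fun j => by positivity
    by_cases hcase : ∀ j, |(k j : ℝ) / (m j : ℝ) - x j| ≤ δ0
    · have hkK : (fun j => (k j : ℝ) / (m j : ℝ)) ∈ K := by
        constructor
        · intro j; exact hk0 j
        · intro j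
          have := abs_le.mp (hcase j)
          have := hxL j
          simp only []
          linarith [ (abs_le.mp (hcase j)).2 ]
      have hxK : x ∈ K := by
        constructor
        · intro j; exact hx0 j
        · intro j; have := hxL j; simp only []; linarith
      have hdist : dist (fun j => (k j : ℝ) / (m j : ℝ)) x < δ := by
        have : dist (fun j => (k j : ℝ) / (m j : ℝ)) x ≤ δ0 := by
          rw [dist_pi_le_iff hδ0.le]
          intro j
          rw [Real.dist_eq]
          exact hcase j
        linarith
      have := hδ' _ hkK _ hxK hdist
      rw [Real.dist_eq] at this
      have hsum0 : 0 ≤ ∑ j, ((k j : ℝ) / (m j : ℝ) - x j) ^ 2 :=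
        Finset.sum_nonneg fun j _ => sq_nonneg _
      have h2 : 0 ≤ (2 / δ0 ^ 2) * ∑ j, ((k j : ℝ) / (m j : ℝ) - x j) ^ 2 := by positivity
      linarith
    · push_neg at hcase
      obtain ⟨j0, hj0⟩ := hcase
      have hterm : δ0 ^ 2 ≤ ((k j0 : ℝ) / (m j0 : ℝ) - x j0) ^ 2 := by
        calc δ0 ^ 2 ≤ |(k j0 : ℝ) / (m j0 : ℝ) - x j0| ^ 2 :=
              pow_le_pow_left₀ hδ0.le hj0.le 2
          _ = ((k j0 : ℝ) / (m j0 : ℝ) - x j0) ^ 2 := sq_abs _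
      have hsumge : δ0 ^ 2 ≤ ∑ j, ((k j : ℝ) / (m j : ℝ) - x j) ^ 2 :=
        le_trans hterm (Finset.single_le_sum (fun j _ => sq_nonneg
          ((k j : ℝ) / (m j : ℝ) - x j)) (Finset.mem_univ j0))
      have h2 : (2 : ℝ) ≤ (2 / δ0 ^ 2) * ∑ j, ((k j : ℝ) / (m j : ℝ) - x j) ^ 2 := by
        rw [div_mul_eq_mul_div, le_div_iff₀ (by positivity)]
        nlinarith
      have hFk := hFb _ hk0
      have hFx := hFb _ hx0
      calc |F (fun j => (k j : ℝ) / (m j : ℝ)) - F x|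
          ≤ |F (fun j => (k j : ℝ) / (m j : ℝ))| + |F x| := abs_sub _ _
        _ ≤ 2 := by linarith
        _ ≤ ε / 2 + (2 / δ0 ^ 2) * ∑ j, ((k j : ℝ) / (m j : ℝ) - x j) ^ 2 := by linarith
  -- rewrite difference as a tsum
  have hFbdd : ∀ k : Fin d → ℕ, |F (fun j => (k j : ℝ) / (m j : ℝ))| ≤ 1 :=
    fun k => hFb _ (fun j => by positivity)
  rw [szasz_sub_self hx0 hFbdd]
  -- the dominating function
  set φ : (Fin d → ℕ) → ℝ := fun k =>
    (ε / 2 + (2 / δ0 ^ 2) * ∑ j, ((k j : ℝ) / (m j : ℝ) - x j) ^ 2) * poissonWeight m k x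
    with hφdef
  have hφsum : HasSum φ (ε / 2 + (2 / δ0 ^ 2) * ∑ j, x j / (m j : ℝ)) := by
    have h1 : HasSum (fun k : Fin d → ℕ => (ε / 2) * poissonWeight m k x) (ε / 2 * 1) :=
      (hasSum_poissonWeight hx0).mul_left _
    have h2 : HasSum (fun k : Fin d → ℕ =>
        (∑ j, ((k j : ℝ) / (m j : ℝ) - x j) ^ 2) * poissonWeight m k x)
        (∑ j, x j / (m j : ℝ)) := by
      have := hasSum_sum (s := (Finset.univ : Finset (Fin d)))
        (f := fun j (k : Fin d → ℕ) => ((k j : ℝ) / (m j : ℝ) - x j) ^ 2 * poissonWeight m k x)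
        (a := fun j => x j / (m j : ℝ))
        (fun j _ => hasSum_poissonWeight_coord hx0 hm j)
      convert this using 1
      funext k
      rw [Finset.sum_mul]
    have := h1.add (h2.mul_left (2 / δ0 ^ 2))
    rw [mul_one] at this
    convert this using 1
    funext k
    simp only [hφdef]
    ring
  have hb : ∀ k : Fin d → ℕ,
      |(F (fun j => (k j : ℝ) / (m j : ℝ)) - F x) * poissonWeight m k x| ≤ φ k := by
    intro k
    have h1 := hpt k
    have h0 := poissonWeight_nonneg (m := m) hx0 k
    calc |(F (fun j => (k j : ℝ) / (m j : ℝ)) - F x) * poissonWeight m k x|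
        = |F (fun j => (k j : ℝ) / (m j : ℝ)) - F x| * poissonWeight m k x := by
          rw [abs_mul, abs_of_nonneg h0]
      _ ≤ φ k := mul_le_mul_of_nonneg_right h1 h0
  have hbound := abs_tsum_le hb hφsum.summable
  refine le_trans hbound.2 ?_
  rw [hφsum.tsum_eq]
  -- final numeric estimate
  have hNpos : (0 : ℝ) < N := by exact_mod_cast Nat.succ_pos _
  have hsum_le : ∑ j, x j / (m j : ℝ) ≤ d * L / N := by
    have : ∀ j, x j / (m j : ℝ) ≤ L / N := by
      intro j
      have hmj : (N : ℝ) ≤ (m j : ℝ) := by exact_mod_cast hmN j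
      exact div_le_div₀ (hL.le) (hxL j) hNpos hmj
    calc ∑ j, x j / (m j : ℝ) ≤ ∑ _j : Fin d, L / N := Finset.sum_le_sum fun j _ => this j
      _ = d * L / N := by
        rw [Finset.sum_const, Finset.card_univ, Fintype.card_fin, nsmul_eq_mul]
        ring
  have hkey : (2 / δ0 ^ 2) * (d * L / N) ≤ ε / 2 := by
    have hceil : 4 * d * L / (δ0 ^ 2 * ε) ≤ (N : ℝ) := by
      have h1 := Nat.le_ceil (4 * d * L / (δ0 ^ 2 * ε))
      have h2 : (⌈4 * d * L / (δ0 ^ 2 * ε)⌉₊ : ℝ) ≤ N := by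
        rw [hNdef]; push_cast; linarith
      linarith
    rw [div_le_iff₀ (by positivity : (0:ℝ) < δ0 ^ 2 * ε)] at hceil
    rw [div_mul_div_comm, div_le_div_iff₀ (by positivity) (by positivity : (0:ℝ) < 2)]
    nlinarith [hceil]
  have h2 : (2 / δ0 ^ 2) * ∑ j, x j / (m j : ℝ) ≤ (2 / δ0 ^ 2) * (d * L / N) :=
    mul_le_mul_of_nonneg_left hsum_le (by positivity)
  linarith

section Emp
variable {d : ℕ} {Ω : Type*} (X : ℕ → Ω → Fin d → ℝ) (ω : Ω)

lemma ecdf_nonneg (n : ℕ) (x : Fin d → ℝ) : 0 ≤ ecdf n X ω x := by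
  unfold ecdf
  refine mul_nonneg (by positivity) (Finset.sum_nonneg fun i _ => ?_)
  split_ifs <;> norm_num

lemma ecdf_le_one (n : ℕ) (x : Fin d → ℝ) : ecdf n X ω x ≤ 1 := by
  unfold ecdf
  rcases Nat.eq_zero_or_pos n with hn | hn
  · simp [hn]
  have hsum : (∑ i ∈ Finset.range n, if ∀ j, X i ω j ≤ x j then (1 : ℝ) else 0) ≤ n := by
    calc (∑ i ∈ Finset.range n, if ∀ j, X i ω j ≤ x j then (1 : ℝ) else 0)
        ≤ ∑ _i ∈ Finset.range n, (1 : ℝ) :=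
          Finset.sum_le_sum fun i _ => by split_ifs <;> norm_num
      _ = n := by simp
  have hn0 : (0 : ℝ) < n := by exact_mod_cast hn
  calc (n : ℝ)⁻¹ * ∑ i ∈ Finset.range n, (if ∀ j, X i ω j ≤ x j then (1 : ℝ) else 0)
      ≤ (n : ℝ)⁻¹ * n := mul_le_mul_of_nonneg_left hsum (by positivity)
    _ = 1 := inv_mul_cancel₀ hn0.ne'

lemma ecdf_abs_le_one (n : ℕ) (x : Fin d → ℝ) : |ecdf n X ω x| ≤ 1 :=
  abs_le.mpr ⟨by linarith [ecdf_nonneg X ω n x], ecdf_le_one X ω n x⟩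

lemma ecdf_mono (n : ℕ) {x x' : Fin d → ℝ} (h : ∀ j, x j ≤ x' j) :
    ecdf n X ω x ≤ ecdf n X ω x' := by
  unfold ecdf
  refine mul_le_mul_of_nonneg_left (Finset.sum_le_sum fun i _ => ?_) (by positivity)
  split_ifs with h1 h2
  · exact le_rfl
  · exact absurd (fun j => le_trans (h1 j) (h j)) h2
  · norm_num
  · exact le_rfl

lemma ecdf_trunc {n : ℕ} (hn : 1 ≤ n) (T : ℝ) (y : Fin d → ℝ) :
    ecdf n X ω y ≤ ecdf n X ω (fun j => min (y j) T) + (1 - ecdf n X ω (fun _ => T)) := by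
  have hnpos : (0 : ℝ) < n := by exact_mod_cast hn
  have key : (∑ i ∈ Finset.range n, if ∀ j, X i ω j ≤ y j then (1 : ℝ) else 0)
      ≤ (∑ i ∈ Finset.range n, if ∀ j, X i ω j ≤ min (y j) T then (1 : ℝ) else 0)
        + ((n : ℝ) - ∑ i ∈ Finset.range n, if ∀ j, X i ω j ≤ T then (1 : ℝ) else 0) := by
    have hsplit : ((n : ℝ) - ∑ i ∈ Finset.range n, if ∀ j, X i ω j ≤ T then (1 : ℝ) else 0)
        = ∑ i ∈ Finset.range n, (1 - if ∀ j, X i ω j ≤ T then (1 : ℝ) else 0) := by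
      rw [Finset.sum_sub_distrib]
      simp
    rw [hsplit, ← Finset.sum_add_distrib]
    refine Finset.sum_le_sum fun i _ => ?_
    by_cases h1 : ∀ j, X i ω j ≤ y j
    · by_cases h2 : ∀ j, X i ω j ≤ min (y j) T
      · have : (0:ℝ) ≤ 1 - if ∀ j, X i ω j ≤ T then (1 : ℝ) else 0 := by
          split_ifs <;> norm_num
        simp only [if_pos h1, if_pos h2]
        linarith
      · have h3 : ¬ ∀ j, X i ω j ≤ T := fun h3 => h2 (fun j => le_min (h1 j) (h3 j))
        simp only [if_pos h1, if_neg h2, if_neg h3]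
        norm_num
    · have : (0:ℝ) ≤ if ∀ j, X i ω j ≤ min (y j) T then (1 : ℝ) else 0 := by
        split_ifs <;> norm_num
      have h4 : (0:ℝ) ≤ 1 - if ∀ j, X i ω j ≤ T then (1 : ℝ) else 0 := by
        split_ifs <;> norm_num
      simp only [if_neg h1]
      linarith
  unfold ecdf
  have h5 := mul_le_mul_of_nonneg_left key (inv_nonneg.mpr hnpos.le)
  calc (n : ℝ)⁻¹ * ∑ i ∈ Finset.range n, (if ∀ j, X i ω j ≤ y j then (1 : ℝ) else 0)
      ≤ (n : ℝ)⁻¹ * ((∑ i ∈ Finset.range n, if ∀ j, X i ω j ≤ min (y j) T then (1 : ℝ) else 0)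
        + ((n : ℝ) - ∑ i ∈ Finset.range n, if ∀ j, X i ω j ≤ T then (1 : ℝ) else 0)) := h5
    _ = (n : ℝ)⁻¹ * (∑ i ∈ Finset.range n, if ∀ j, X i ω j ≤ min (y j) T then (1 : ℝ) else 0)
        + (1 - (n : ℝ)⁻¹ * ∑ i ∈ Finset.range n, if ∀ j, X i ω j ≤ T then (1 : ℝ) else 0) := by
      field_simp
end Emp

section Prob
set_option linter.unusedSectionVars false

lemma measurableSet_le_pt {d : ℕ} (p : Fin d → ℝ) :
    MeasurableSet {z : Fin d → ℝ | ∀ j, z j ≤ p j} := by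
  have : {z : Fin d → ℝ | ∀ j, z j ≤ p j}
      = ⋂ j, (fun z : Fin d → ℝ => z j) ⁻¹' Set.Iic (p j) := by
    ext z; simp [Set.mem_iInter]
  rw [this]
  exact MeasurableSet.iInter fun j => (measurable_pi_apply j) measurableSet_Iic

variable {d : ℕ} {Ω : Type*} [MeasurableSpace Ω] (μ : Measure Ω) [IsProbabilityMeasure μ]
  (X : ℕ → Ω → Fin d → ℝ) (F : (Fin d → ℝ) → ℝ) (hX : IsIIDwithCDF μ X F)
include hX

lemma measurableSet_event (i : ℕ) (p : Fin d → ℝ) :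
    MeasurableSet {ω : Ω | ∀ j, X i ω j ≤ p j} :=
  (hX.1 i) (measurableSet_le_pt p)

lemma F_nonneg (x : Fin d → ℝ) : 0 ≤ F x := by
  rw [hX.2.2.2.2 x]; exact ENNReal.toReal_nonneg

lemma F_le_one (x : Fin d → ℝ) : F x ≤ 1 := by
  rw [hX.2.2.2.2 x]
  calc (μ {ω | ∀ j, X 0 ω j ≤ x j}).toReal
      ≤ (μ Set.univ).toReal :=
        ENNReal.toReal_mono (measure_ne_top μ _) (measure_mono (Set.subset_univ _))
    _ = 1 := by simp

lemma F_abs_le_one (x : Fin d → ℝ) : |F x| ≤ 1 :=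
  abs_le.mpr ⟨by linarith [F_nonneg μ X F hX x], F_le_one μ X F hX x⟩

lemma F_mono {x x' : Fin d → ℝ} (h : ∀ j, x j ≤ x' j) : F x ≤ F x' := by
  rw [hX.2.2.2.2 x, hX.2.2.2.2 x']
  exact ENNReal.toReal_mono (measure_ne_top μ _)
    (measure_mono fun ω hω j => le_trans (hω j) (h j))

lemma F_trunc (T : ℝ) (y : Fin d → ℝ) :
    F y ≤ F (fun j => min (y j) T) + (1 - F (fun _ => T)) := by
  have hC : MeasurableSet {ω : Ω | ∀ j, X 0 ω j ≤ T} := by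
    have := measurableSet_event μ X F hX 0 (fun _ => T)
    simpa using this
  have hincl : {ω : Ω | ∀ j, X 0 ω j ≤ y j}
      ⊆ {ω : Ω | ∀ j, X 0 ω j ≤ min (y j) T} ∪ {ω : Ω | ∀ j, X 0 ω j ≤ T}ᶜ := by
    intro ω hω
    by_cases hc : ∀ j, X 0 ω j ≤ T
    · exact Or.inl fun j => le_min (hω j) (hc j)
    · exact Or.inr hc
  have h1 : μ {ω | ∀ j, X 0 ω j ≤ y j}
      ≤ μ {ω | ∀ j, X 0 ω j ≤ min (y j) T} + μ ({ω | ∀ j, X 0 ω j ≤ T}ᶜ) :=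
    le_trans (measure_mono hincl) (measure_union_le _ _)
  have hcompl : (μ ({ω : Ω | ∀ j, X 0 ω j ≤ T}ᶜ)).toReal = 1 - F (fun _ => T) := by
    rw [measure_compl hC (measure_ne_top μ _), measure_univ]
    rw [ENNReal.toReal_sub_of_le prob_le_one ENNReal.one_ne_top]
    rw [hX.2.2.2.2 (fun _ => T)]
    simp
  rw [hX.2.2.2.2 y, hX.2.2.2.2 (fun j => min (y j) T)]
  calc (μ {ω | ∀ j, X 0 ω j ≤ y j}).toReal
      ≤ (μ {ω | ∀ j, X 0 ω j ≤ min (y j) T} + μ ({ω | ∀ j, X 0 ω j ≤ T}ᶜ)).toReal :=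
        ENNReal.toReal_mono (by finiteness) h1
    _ = (μ {ω | ∀ j, X 0 ω j ≤ min (y j) T}).toReal
        + (μ ({ω | ∀ j, X 0 ω j ≤ T}ᶜ)).toReal :=
        ENNReal.toReal_add (measure_ne_top μ _) (measure_ne_top μ _)
    _ = (μ {ω | ∀ j, X 0 ω j ≤ min (y j) T}).toReal + (1 - F (fun _ => T)) := by
        rw [hcompl]

lemma slln_point (p : Fin d → ℝ) :
    ∀ᵐ ω ∂μ, Tendsto (fun n => ecdf n X ω p) atTop (𝓝 (F p)) := by
  classical
  set S : Set (Fin d → ℝ) := {z | ∀ j, z j ≤ p j} with hSdef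
  have hS : MeasurableSet S := measurableSet_le_pt p
  set φ : (Fin d → ℝ) → ℝ := S.indicator fun _ => (1:ℝ) with hφdef
  have hφm : Measurable φ := measurable_const.indicator hS
  set Y : ℕ → Ω → ℝ := fun i => φ ∘ X i with hYdef
  have hYeq : ∀ i ω, Y i ω = if ∀ j, X i ω j ≤ p j then (1:ℝ) else 0 := by
    intro i ω
    by_cases h : ∀ j, X i ω j ≤ p j <;>
      simp [hYdef, hφdef, Set.indicator_apply, hSdef, h]
  have hA : MeasurableSet {ω : Ω | ∀ j, X 0 ω j ≤ p j} := measurableSet_event μ X F hX 0 p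
  have hY0 : Y 0 = ({ω : Ω | ∀ j, X 0 ω j ≤ p j}).indicator fun _ => (1:ℝ) := by
    funext ω
    by_cases h : ∀ j, X 0 ω j ≤ p j <;> simp [hYeq, Set.indicator_apply, h]
  have hint : Integrable (Y 0) μ := by
    rw [hY0]; exact (integrable_const 1).indicator hA
  have hindep : Pairwise (Function.onFun (IndepFun · · μ) Y) :=
    fun i j hij => (hX.2.1.indepFun hij).comp hφm hφm
  have hident : ∀ i, IdentDistrib (Y i) (Y 0) μ μ := fun i => (hX.2.2.1 i).comp hφm
  have hSLLN := strong_law_ae_real Y hint hindep hident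
  have hEint : (∫ ω, Y 0 ω ∂μ) = F p := by
    rw [hY0, integral_indicator_const (1 : ℝ) hA, smul_eq_mul, mul_one, hX.2.2.2.2 p]
    rfl
  filter_upwards [hSLLN] with ω hω
  have heq : (fun n => ecdf n X ω p) = fun n => (∑ i ∈ Finset.range n, Y i ω) / n := by
    funext n
    rw [ecdf, div_eq_inv_mul]
    congr 1
    exact Finset.sum_congr rfl fun i _ => (hYeq i ω).symm
  rw [heq, ← hEint]
  exact hω

lemma tail_bound (hd : 0 < d) {ε : ℝ} (hε : 0 < ε) :
    ∃ T : ℝ, 0 < T ∧ 1 - F (fun _ => T) ≤ ε := by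
  set s : ℕ → Set Ω := fun N => {ω | ∀ j, X 0 ω j ≤ (N : ℝ)} with hsdef
  have hmono : Monotone s := by
    intro N M hNM ω hω j
    exact le_trans (hω j) (by exact_mod_cast hNM)
  have hunion : (⋃ N, s N) = Set.univ := by
    ext ω
    simp only [Set.mem_iUnion, Set.mem_univ, iff_true]
    obtain ⟨c, hc⟩ := Finset.exists_le (Finset.univ.image fun j => X 0 ω j)
    obtain ⟨N, hN⟩ := exists_nat_ge c
    refine ⟨N, fun j => ?_⟩
    exact le_trans (hc _ (Finset.mem_image_of_mem _ (Finset.mem_univ j))) hN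
  have htend : Tendsto (fun N => μ (s N)) atTop (𝓝 1) := by
    have := MeasureTheory.tendsto_measure_iUnion_atTop (μ := μ) hmono
    rwa [hunion, measure_univ] at this
  have htoReal : Tendsto (fun N => (μ (s N)).toReal) atTop (𝓝 1) := by
    have h := (ENNReal.tendsto_toReal (ENNReal.one_ne_top)).comp htend
    exact h
  have hev : ∀ᶠ N : ℕ in atTop, 1 - ε < (μ (s N)).toReal :=
    htoReal.eventually (eventually_gt_nhds (by linarith : 1 - ε < (1:ℝ)))
  obtain ⟨N, hN⟩ := hev.exists
  refine ⟨(N : ℝ) + 1, by positivity, ?_⟩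
  have h1 : F (fun _ => (N : ℝ)) ≤ F (fun _ => (N : ℝ) + 1) :=
    F_mono μ X F hX (fun j => by norm_num)
  have h2 : F (fun _ => (N : ℝ)) = (μ (s N)).toReal := hX.2.2.2.2 _
  linarith

lemma bracket (hd : 0 < d)
    (hFcont : ContinuousOn F {x : Fin d → ℝ | ∀ j, 0 ≤ x j})
    {ε : ℝ} (hε : 0 < ε) :
    ∃ s : Finset (Fin d → ℝ), (∀ p ∈ s, ∀ j, 0 ≤ p j) ∧
      ∀ (ω : Ω) (n : ℕ), 1 ≤ n → ∀ Δ : ℝ, (∀ p ∈ s, |ecdf n X ω p - F p| ≤ Δ) →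
      ∀ y : Fin d → ℝ, (∀ j, 0 ≤ y j) → |ecdf n X ω y - F y| ≤ 2 * Δ + 2 * ε := by
  classical
  obtain ⟨T, hT, hTtail⟩ := tail_bound μ X F hX hd hε
  -- uniform continuity on [0,T]^d
  set K : Set (Fin d → ℝ) := Set.Icc (0 : Fin d → ℝ) (fun _ => T) with hKdef
  have hKsub : K ⊆ {x : Fin d → ℝ | ∀ j, 0 ≤ x j} := fun z hz j => (hz.1 : (0:Fin d → ℝ) ≤ z) j
  have hUC := (isCompact_Icc : IsCompact K).uniformContinuousOn_of_continuous
    (hFcont.mono hKsub)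
  rw [Metric.uniformContinuousOn_iff] at hUC
  obtain ⟨δ, hδ, hδ'⟩ := hUC ε hε
  set δ0 : ℝ := δ / 2 with hδ0def
  have hδ0 : 0 < δ0 := by positivity
  set Knat : ℕ := ⌈T / δ0⌉₊ with hKnatdef
  set g : (Fin d → ℕ) → (Fin d → ℝ) := fun c j => min ((c j : ℝ) * δ0) T with hgdef
  refine ⟨Finset.image g (Fintype.piFinset fun _ : Fin d => Finset.range (Knat + 2)),
    ?_, ?_⟩
  · intro p hp j
    obtain ⟨c, _, rfl⟩ := Finset.mem_image.mp hp
    exact le_min (mul_nonneg (Nat.cast_nonneg _) hδ0.le) hT.le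
  intro ω n hn Δ hΔ y hy
  set E : (Fin d → ℝ) → ℝ := ecdf n X ω with hEdef
  set y' : Fin d → ℝ := fun j => min (y j) T with hy'def
  have hy'0 : ∀ j, 0 ≤ y' j := fun j => le_min (hy j) hT.le
  have hy'T : ∀ j, y' j ≤ T := fun j => min_le_right _ _
  have hy'y : ∀ j, y' j ≤ y j := fun j => min_le_left _ _
  set c : Fin d → ℕ := fun j => ⌊y' j / δ0⌋₊ with hcdef
  have hfl : ∀ j, (c j : ℝ) * δ0 ≤ y' j := by
    intro j
    have h1 : (c j : ℝ) ≤ y' j / δ0 := Nat.floor_le (div_nonneg (hy'0 j) hδ0.le)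
    calc (c j : ℝ) * δ0 ≤ (y' j / δ0) * δ0 := mul_le_mul_of_nonneg_right h1 hδ0.le
      _ = y' j := div_mul_cancel₀ _ hδ0.ne'
  have hflub : ∀ j, y' j < ((c j : ℝ) + 1) * δ0 := by
    intro j
    have h1 : y' j / δ0 < (c j : ℝ) + 1 := Nat.lt_floor_add_one _
    calc y' j = (y' j / δ0) * δ0 := (div_mul_cancel₀ _ hδ0.ne').symm
      _ < ((c j : ℝ) + 1) * δ0 := mul_lt_mul_of_pos_right h1 hδ0
  have hcK : ∀ j, c j ≤ Knat := by
    intro j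
    calc c j = ⌊y' j / δ0⌋₊ := rfl
      _ ≤ ⌊T / δ0⌋₊ := Nat.floor_mono ((div_le_div_iff_of_pos_right hδ0).mpr (hy'T j))
      _ ≤ Knat := Nat.floor_le_ceil _
  set a : Fin d → ℝ := fun j => (c j : ℝ) * δ0 with hadef
  set b : Fin d → ℝ := g (fun j => c j + 1) with hbdef
  set τ : Fin d → ℝ := fun _ => T with hτdef
  have hamem : a ∈ Finset.image g (Fintype.piFinset fun _ : Fin d => Finset.range (Knat + 2)) := by
    refine Finset.mem_image.mpr ⟨c, ?_, ?_⟩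
    · rw [Fintype.mem_piFinset]
      intro j
      exact Finset.mem_range.mpr (lt_of_le_of_lt (hcK j) (by omega))
    · funext j
      exact min_eq_left (le_trans (hfl j) (hy'T j))
  have hbmem : b ∈ Finset.image g (Fintype.piFinset fun _ : Fin d => Finset.range (Knat + 2)) := by
    refine Finset.mem_image.mpr ⟨fun j => c j + 1, ?_, rfl⟩
    rw [Fintype.mem_piFinset]
    intro j
    exact Finset.mem_range.mpr (by have := hcK j; omega)
  have hTle : T ≤ (Knat : ℝ) * δ0 := by
    have h1 : T / δ0 ≤ (Knat : ℝ) := Nat.le_ceil _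
    calc T = (T / δ0) * δ0 := (div_mul_cancel₀ _ hδ0.ne').symm
      _ ≤ (Knat : ℝ) * δ0 := mul_le_mul_of_nonneg_right h1 hδ0.le
  have hτmem : τ ∈ Finset.image g (Fintype.piFinset fun _ : Fin d => Finset.range (Knat + 2)) := by
    refine Finset.mem_image.mpr ⟨fun _ => Knat + 1, ?_, ?_⟩
    · rw [Fintype.mem_piFinset]
      intro j
      exact Finset.mem_range.mpr (by omega)
    · funext j
      refine min_eq_right ?_
      push_cast
      nlinarith [hδ0]
  have hbj : ∀ j, b j ≤ ((c j : ℝ) + 1) * δ0 := by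
    intro j
    have h1 : b j ≤ ((c j + 1 : ℕ) : ℝ) * δ0 := min_le_left _ _
    push_cast at h1
    exact h1
  have hab : ∀ j, a j ≤ b j := by
    intro j
    refine le_min ?_ (le_trans (hfl j) (hy'T j))
    push_cast
    have h3 : a j = (c j : ℝ) * δ0 := rfl
    have h4 : ((c j : ℝ) + 1) * δ0 = (c j : ℝ) * δ0 + δ0 := by ring
    linarith
  have hy'b : ∀ j, y' j ≤ b j := by
    intro j
    refine le_min ?_ (hy'T j)
    push_cast
    exact (hflub j).le
  have hay' : ∀ j, a j ≤ y' j := hfl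
  have haK : a ∈ K :=
    ⟨fun j => mul_nonneg (Nat.cast_nonneg _) hδ0.le, fun j => le_trans (hfl j) (hy'T j)⟩
  have hbK : b ∈ K :=
    ⟨fun j => le_min (mul_nonneg (Nat.cast_nonneg _) hδ0.le) hT.le, fun j => min_le_right _ _⟩
  have hdistab : dist a b < δ := by
    have h1 : dist a b ≤ δ0 := by
      rw [dist_pi_le_iff hδ0.le]
      intro j
      rw [Real.dist_eq, abs_of_nonpos (by linarith [hab j] : a j - b j ≤ 0)]
      have h2 := hbj j
      have h3 : a j = (c j : ℝ) * δ0 := rfl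
      have h4 : ((c j : ℝ) + 1) * δ0 = a j + δ0 := by rw [h3]; ring
      linarith
    have h5 : δ0 < δ := by rw [hδ0def]; linarith
    linarith
  have hFab : |F b - F a| < ε := by
    have := hδ' b hbK a haK (by rwa [dist_comm])
    rwa [Real.dist_eq] at this
  -- numbered facts
  have hda := abs_le.mp (hΔ a hamem)
  have hdb := abs_le.mp (hΔ b hbmem)
  have hdτ := abs_le.mp (hΔ τ hτmem)
  have hΔ0 : 0 ≤ Δ := le_trans (abs_nonneg _) (hΔ τ hτmem)
  have hE1 : E y ≤ E y' + (1 - E τ) := ecdf_trunc X ω hn T y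
  have hE2 : E y' ≤ E b := ecdf_mono X ω n hy'b
  have hE3 : E a ≤ E y' := ecdf_mono X ω n hay'
  have hE4 : E y' ≤ E y := ecdf_mono X ω n hy'y
  have hF1 : F y ≤ F y' + (1 - F τ) := F_trunc μ X F hX T y
  have hF2 : F a ≤ F y' := F_mono μ X F hX hay'
  have hF3 : F y' ≤ F y := F_mono μ X F hX hy'y
  have hF4 : F y' ≤ F b := F_mono μ X F hX hy'b
  have hFab' := abs_le.mp hFab.le
  rw [abs_le]
  constructor
  · -- -(2Δ+2ε) ≤ E y - F y
    nlinarith [hE3, hE4, hF1, hda.1, hda.2, hFab'.1, hFab'.2, hF4, hTtail, hΔ0]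
  · -- E y - F y ≤ 2Δ + 2ε
    nlinarith [hE1, hE2, hF2, hF3, hdb.1, hdb.2, hdτ.1, hdτ.2, hFab'.1, hFab'.2, hTtail, hΔ0]

lemma GC (hd : 0 < d)
    (hFcont : ContinuousOn F {x : Fin d → ℝ | ∀ j, 0 ≤ x j}) :
    ∀ᵐ ω ∂μ, ∀ η : ℝ, 0 < η → ∃ N : ℕ, 1 ≤ N ∧ ∀ n, N ≤ n →
      ∀ y : Fin d → ℝ, (∀ j, 0 ≤ y j) → |ecdf n X ω y - F y| ≤ η := by
  have hbr : ∀ r : ℕ, ∃ s : Finset (Fin d → ℝ), (∀ p ∈ s, ∀ j, 0 ≤ p j) ∧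
      ∀ (ω : Ω) (n : ℕ), 1 ≤ n → ∀ Δ : ℝ, (∀ p ∈ s, |ecdf n X ω p - F p| ≤ Δ) →
      ∀ y : Fin d → ℝ, (∀ j, 0 ≤ y j) →
        |ecdf n X ω y - F y| ≤ 2 * Δ + 2 * (1 / (r + 1)) := by
    intro r
    exact bracket μ X F hX hd hFcont (by positivity)
  choose s hs1 hs2 using hbr
  have hae : ∀ᵐ ω ∂μ, ∀ r : ℕ, ∀ p ∈ (↑(s r) : Set (Fin d → ℝ)),
      Tendsto (fun n => ecdf n X ω p) atTop (𝓝 (F p)) := by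
    rw [MeasureTheory.ae_all_iff]
    intro r
    rw [MeasureTheory.ae_ball_iff (Finset.countable_toSet (s r))]
    intro p _
    exact slln_point μ X F hX p
  filter_upwards [hae] with ω hω η hη
  obtain ⟨r, hr⟩ : ∃ r : ℕ, (1 : ℝ) / (r + 1) ≤ η / 4 := by
    obtain ⟨r, hr⟩ := exists_nat_gt (4 / η)
    refine ⟨r, ?_⟩
    rw [div_le_div_iff₀ (by positivity) (by norm_num : (0:ℝ) < 4)]
    have h1 : 4 / η ≤ (r : ℝ) + 1 := by linarith
    rw [div_le_iff₀ hη] at h1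
    linarith
  have hev : ∀ᶠ n in atTop, ∀ p ∈ s r, |ecdf n X ω p - F p| ≤ η / 4 := by
    rw [eventually_all_finset]
    intro p hp
    have h1 := Metric.tendsto_atTop.mp (hω r p (Finset.mem_coe.mpr hp)) (η / 4) (by positivity)
    obtain ⟨N, hN⟩ := h1
    filter_upwards [Filter.eventually_ge_atTop N] with n hn
    have := hN n hn
    rw [Real.dist_eq] at this
    linarith
  obtain ⟨N1, hN1⟩ := Filter.eventually_atTop.mp hev
  refine ⟨max N1 1, le_max_right _ _, ?_⟩
  intro n hn y hy
  have h := hs2 r ω n (le_trans (le_max_right _ _) hn) (η / 4)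
    (hN1 n (le_trans (le_max_left _ _) hn)) y hy
  calc |ecdf n X ω y - F y| ≤ 2 * (η / 4) + 2 * (1 / (r + 1)) := h
    _ ≤ 2 * (η / 4) + 2 * (η / 4) := by linarith
    _ = η := by ring
end Prob

end Helpers

/-- Theorem 2.7: almost sure uniform consistency on compacts. -/


theorem szasz_estimator_uniform_consistency
    {d : ℕ} (hd : 0 < d) {Ω : Type*} [MeasurableSpace Ω]
    (μ : Measure Ω) [IsProbabilityMeasure μ]
    (X : ℕ → Ω → Fin d → ℝ) (F : (Fin d → ℝ) → ℝ)
    (hX : IsIIDwithCDF μ X F)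
    (hFcont : ContinuousOn F {x : Fin d → ℝ | ∀ j, 0 ≤ x j})
    (mseq : ℕ → Fin d → ℕ) (hmpos : ∀ n j, 0 < mseq n j)
    (hmin : Tendsto (fun n : ℕ => mmin (mseq n)) atTop atTop) :
    ∀ L > (0 : ℝ), ∀ᵐ ω ∂μ,
      Tendsto (fun n : ℕ =>
          sSup ((fun x => |szaszEst (mseq n) n X ω x - F x|) ''
            Set.Icc (0 : Fin d → ℝ) (fun _ => L)))
        atTop (nhds 0) := by
  intro L hL
  have hGC := GC μ X F hX hd hFcont
  filter_upwards [hGC] with ω hω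
  rw [Metric.tendsto_atTop]
  intro ε hε
  obtain ⟨NB, hNBpos, hNB⟩ := szasz_approx hd F hFcont
    (fun y _ => F_abs_le_one μ X F hX y) hL (by positivity : (0:ℝ) < ε / 4)
  obtain ⟨N1, hN1⟩ := Filter.eventually_atTop.mp (hmin.eventually_ge_atTop NB)
  obtain ⟨N2, hN2one, hN2⟩ := hω (ε / 4) (by positivity)
  refine ⟨max N1 N2, ?_⟩
  intro n hn
  have hmge : ∀ j, NB ≤ mseq n j := by
    intro j
    have h1 : NB ≤ mmin (mseq n) := hN1 n (le_trans (le_max_left _ _) hn)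
    have h2 : mmin (mseq n) ≤ mseq n j := Nat.sInf_le ⟨j, rfl⟩
    omega
  have hkey : ∀ x ∈ Set.Icc (0 : Fin d → ℝ) (fun _ => L),
      |szaszEst (mseq n) n X ω x - F x| ≤ ε / 2 := by
    intro x hx
    have hx0 : ∀ j, 0 ≤ x j := fun j => hx.1 j
    have happrox := hNB (mseq n) (hmpos n) hmge x hx
    have hE : ∀ k : Fin d → ℕ,
        |ecdf n X ω (fun j => (k j : ℝ) / (mseq n j : ℝ))| ≤ 1 :=
      fun k => ecdf_abs_le_one X ω n _
    have hFk : ∀ k : Fin d → ℕ,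
        |F (fun j => (k j : ℝ) / (mseq n j : ℝ))| ≤ 1 :=
      fun k => F_abs_le_one μ X F hX _
    have hdiffk : ∀ k : Fin d → ℕ,
        |ecdf n X ω (fun j => (k j : ℝ) / (mseq n j : ℝ)) -
          F (fun j => (k j : ℝ) / (mseq n j : ℝ))| ≤ ε / 4 := by
      intro k
      exact hN2 n (le_trans (le_max_right _ _) hn) _ (fun j => by positivity)
    have hdiff := szasz_diff_bound hx0 hE hFk hdiffk
    calc |szaszEst (mseq n) n X ω x - F x|
        ≤ |szasz (ecdf n X ω) (mseq n) x - szasz F (mseq n) x|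
          + |szasz F (mseq n) x - F x| := abs_sub_le _ _ _
      _ ≤ ε / 4 + ε / 4 := add_le_add hdiff happrox
      _ = ε / 2 := by ring
  set Sn := (fun x => |szaszEst (mseq n) n X ω x - F x|) ''
    Set.Icc (0 : Fin d → ℝ) (fun _ => L) with hSndef
  have h0mem : (0 : Fin d → ℝ) ∈ Set.Icc (0 : Fin d → ℝ) (fun _ => L) :=
    ⟨le_rfl, fun j => hL.le⟩
  have hne : Sn.Nonempty := ⟨_, Set.mem_image_of_mem _ h0mem⟩
  have hbdd : BddAbove Sn := by
    refine ⟨2, ?_⟩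
    rintro v ⟨x, hx, rfl⟩
    have hx0 : ∀ j, 0 ≤ x j := fun j => hx.1 j
    have h1 : |szaszEst (mseq n) n X ω x| ≤ 1 :=
      szasz_abs_le hx0 (fun k => ecdf_abs_le_one X ω n _)
    have h2 := F_abs_le_one μ X F hX x
    calc |szaszEst (mseq n) n X ω x - F x|
        ≤ |szaszEst (mseq n) n X ω x| + |F x| := abs_sub _ _
      _ ≤ 2 := by linarith
  have hsup_le : sSup Sn ≤ ε / 2 := by
    refine csSup_le hne ?_
    rintro v ⟨x, hx, rfl⟩
    exact hkey x hx
  have hsup_ge : 0 ≤ sSup Sn := by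
    obtain ⟨v, hv⟩ := hne
    obtain ⟨x, hx, rfl⟩ := hv
    exact le_trans (abs_nonneg _) (le_csSup hbdd (Set.mem_image_of_mem _ hx))
  rw [Real.dist_eq, sub_zero, abs_of_nonneg hsup_ge]
  linarith
end

section
/- Let 0 < a ≤ b < ∞. There exist a constant C < ∞ and M such that for all integers m ≥ M and all x ∈ [a,b], if K and L are independent Poisson random variables each with mean m·x, then |E[min(K,L)]/m − x + m^{-1/2}·√(x/π)| ≤ C·m^{-1}; equivalently, since E[min(K,L)] − m·x = −(1/2)·E|K − L|, one has E|K − L| = 2·√(m·x/π) + O(m^{-1/2}) uniformly for x ∈ [a,b]. -/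
open Filter Real

namespace PoissonAux

open MeasureTheory

noncomputable def p (l : ℝ) (k : ℕ) : ℝ := Real.exp (-l) * l ^ k / (Nat.factorial k)

lemma p_nonneg {l : ℝ} (hl : 0 ≤ l) (k : ℕ) : 0 ≤ p l k := by
  unfold p; positivity

lemma summable_p (l : ℝ) : Summable (p l) := by
  unfold p
  simpa [mul_div_assoc] using (Real.summable_pow_div_factorial l).mul_left (Real.exp (-l))

lemma tsum_p (l : ℝ) : ∑' k, p l k = 1 := by
  unfold p
  simp_rw [mul_div_assoc, tsum_mul_left]
  have : ∑' n : ℕ, l ^ n / n.factorial = Real.exp l := by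
    rw [Real.exp_eq_exp_ℝ, NormedSpace.exp_eq_tsum_div]
  rw [this, ← Real.exp_add]
  simp

lemma p_le_one {l : ℝ} (hl : 0 ≤ l) (k : ℕ) : p l k ≤ 1 := by
  calc p l k ≤ ∑' k, p l k := (summable_p l).le_tsum k (fun j _ => p_nonneg hl j)
  _ = 1 := tsum_p l

lemma succ_mul_p (l : ℝ) (k : ℕ) : ((k : ℝ) + 1) * p l (k + 1) = l * p l k := by
  unfold p
  rw [Nat.factorial_succ, pow_succ]
  push_cast
  have h1 : (k.factorial : ℝ) ≠ 0 := Nat.cast_ne_zero.2 k.factorial_ne_zero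
  have h2 : (k : ℝ) + 1 ≠ 0 := by positivity
  field_simp

lemma summable_id_mul_p (l : ℝ) : Summable (fun k : ℕ => (k : ℝ) * p l k) := by
  rw [← summable_nat_add_iff 1]
  have : (fun k : ℕ => ((k : ℝ) + 1) * p l (k + 1)) = fun k => l * p l k := by
    funext k; exact_mod_cast succ_mul_p l k
  push_cast
  rw [this]
  exact (summable_p l).mul_left l

lemma tsum_id_mul_p (l : ℝ) : ∑' k : ℕ, (k : ℝ) * p l k = l := by
  rw [(summable_id_mul_p l).tsum_eq_zero_add]
  push_cast
  simp only [succ_mul_p l]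
  rw [tsum_mul_left, tsum_p l]
  simp


noncomputable def q (l : ℝ) (n : ℕ) : ℝ := ∑' k : ℕ, p l (n + k) * p l k

variable {l : ℝ}

lemma summable_pp (hl : 0 ≤ l) : Summable (fun x : ℕ × ℕ => p l x.1 * p l x.2) :=
  (summable_p l).mul_of_nonneg (summable_p l) (fun k => p_nonneg hl k) (fun k => p_nonneg hl k)

lemma shift_inj : Function.Injective (fun x : ℕ × ℕ => ((x.1 + x.2, x.2) : ℕ × ℕ)) := by
  rintro ⟨a, b⟩ ⟨c, d⟩ h
  simp only [Prod.mk.injEq] at h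
  obtain ⟨h1, h2⟩ := h
  subst h2
  simp only [Nat.add_right_cancel_iff] at h1
  simp [h1]

lemma summable_H (hl : 0 ≤ l) : Summable (fun x : ℕ × ℕ => p l (x.1 + x.2) * p l x.2) := by
  have h := (summable_pp hl).comp_injective shift_inj
  exact h

lemma summable_q_slice (hl : 0 ≤ l) (n : ℕ) : Summable (fun k : ℕ => p l (n + k) * p l k) :=
  (summable_H hl).prod_factor n

lemma summable_q (hl : 0 ≤ l) : Summable (q l) := (summable_H hl).prod

lemma q_nonneg (hl : 0 ≤ l) (n : ℕ) : 0 ≤ q l n :=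
  tsum_nonneg fun k => mul_nonneg (p_nonneg hl _) (p_nonneg hl _)

lemma summable_nH (hl : 0 ≤ l) :
    Summable (fun x : ℕ × ℕ => (x.1 : ℝ) * (p l (x.1 + x.2) * p l x.2)) := by
  have hg : Summable (fun x : ℕ × ℕ => ((x.1 : ℝ) * p l x.1) * p l x.2) :=
    (summable_id_mul_p l).mul_of_nonneg (summable_p l)
      (fun k => mul_nonneg (Nat.cast_nonneg k) (p_nonneg hl k)) (fun k => p_nonneg hl k)
  have h2 := hg.comp_injective shift_inj
  refine Summable.of_nonneg_of_le
    (fun x => mul_nonneg (Nat.cast_nonneg _) (mul_nonneg (p_nonneg hl _) (p_nonneg hl _)))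
    (fun x => ?_) h2
  simp only [Function.comp]
  push_cast
  have h3 : 0 ≤ p l (x.1 + x.2) * p l x.2 := mul_nonneg (p_nonneg hl _) (p_nonneg hl _)
  nlinarith [mul_nonneg (Nat.cast_nonneg (α := ℝ) x.2) h3]

lemma summable_nq (hl : 0 ≤ l) : Summable (fun n : ℕ => (n : ℝ) * q l n) := by
  have := (summable_nH hl).prod
  refine this.congr fun n => ?_
  simp [q, tsum_mul_left]

lemma tsum_nq_eq_tsum_prod (hl : 0 ≤ l) :
    ∑' n : ℕ, (n : ℝ) * q l n = ∑' x : ℕ × ℕ, (x.1 : ℝ) * (p l (x.1 + x.2) * p l x.2) := by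
  rw [(summable_nH hl).tsum_prod]
  exact tsum_congr fun n => by simp [q, tsum_mul_left]

lemma q_rec (hl : 0 ≤ l) (n : ℕ) :
    ((n : ℝ) + 1) * q l (n + 1) = l * q l n - l * q l (n + 2) := by
  have hA : Summable (fun k : ℕ => l * (p l (n + k) * p l k)) :=
    (summable_q_slice hl n).mul_left l
  have hB : Summable (fun k : ℕ => (k : ℝ) * (p l (n + 1 + k) * p l k)) := by
    refine Summable.of_nonneg_of_le
      (fun k => mul_nonneg (Nat.cast_nonneg k)
        (mul_nonneg (p_nonneg hl _) (p_nonneg hl _))) (fun k => ?_) (summable_id_mul_p l)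
    have h1 : p l (n + 1 + k) * p l k ≤ p l k :=
      mul_le_of_le_one_left (p_nonneg hl k) (p_le_one hl _)
    exact mul_le_mul_of_nonneg_left h1 (Nat.cast_nonneg k)
  -- A k = (n+1+k) * p l (n+1+k) * p l k = l * (p l (n+k) * p l k)
  have keyA : ∀ k : ℕ, ((n : ℝ) + 1 + (k : ℝ)) * (p l (n + 1 + k) * p l k)
      = l * (p l (n + k) * p l k) := by
    intro k
    have h := succ_mul_p l (n + k)
    push_cast at h
    have hrw : n + 1 + k = (n + k) + 1 := by omega
    rw [hrw]
    calc ((n : ℝ) + 1 + (k : ℝ)) * (p l (n + k + 1) * p l k)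
        = (((n : ℝ) + (k : ℝ) + 1) * p l (n + k + 1)) * p l k := by ring
      _ = (l * p l (n + k)) * p l k := by rw [h]
      _ = l * (p l (n + k) * p l k) := by ring
  have keyB : ∑' k : ℕ, (k : ℝ) * (p l (n + 1 + k) * p l k) = l * q l (n + 2) := by
    rw [hB.tsum_eq_zero_add]
    simp only [Nat.cast_zero, zero_mul, zero_add]
    refine Eq.trans (tsum_congr fun k => ?_) (by rw [tsum_mul_left]; rfl :
      (∑' k : ℕ, l * (p l (n + 2 + k) * p l k)) = l * q l (n + 2))
    have h := succ_mul_p l k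
    have hrw : n + 1 + (k + 1) = n + 2 + k := by omega
    rw [hrw]
    push_cast
    calc ((k : ℝ) + 1) * (p l (n + 2 + k) * p l (k + 1))
        = p l (n + 2 + k) * (((k : ℝ) + 1) * p l (k + 1)) := by ring
      _ = p l (n + 2 + k) * (l * p l k) := by rw [h]
      _ = l * (p l (n + 2 + k) * p l k) := by ring
  have expand : ∀ k : ℕ, ((n : ℝ) + 1) * (p l (n + 1 + k) * p l k)
      = l * (p l (n + k) * p l k) - (k : ℝ) * (p l (n + 1 + k) * p l k) := by
    intro k
    rw [← keyA k]
    ring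
  have hq : ((n : ℝ) + 1) * q l (n + 1) = ∑' k : ℕ, ((n : ℝ) + 1) * (p l (n + 1 + k) * p l k) := by
    rw [tsum_mul_left]; rfl
  rw [hq]
  calc ∑' k : ℕ, ((n : ℝ) + 1) * (p l (n + 1 + k) * p l k)
      = ∑' k : ℕ, (l * (p l (n + k) * p l k) - (k : ℝ) * (p l (n + 1 + k) * p l k)) :=
        tsum_congr expand
    _ = (∑' k : ℕ, l * (p l (n + k) * p l k)) - ∑' k : ℕ, (k : ℝ) * (p l (n + 1 + k) * p l k) :=
        hA.tsum_sub hB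
    _ = l * q l n - l * q l (n + 2) := by rw [keyB, tsum_mul_left]; rfl

lemma tsum_nq (hl : 0 ≤ l) : ∑' n : ℕ, (n : ℝ) * q l n = l * (q l 0 + q l 1) := by
  have hs := summable_nq hl
  have h1 : Filter.Tendsto (fun N => ∑ i ∈ Finset.range (N + 1), (i : ℝ) * q l i)
      Filter.atTop (nhds (∑' n : ℕ, (n : ℝ) * q l n)) :=
    hs.hasSum.tendsto_sum_nat.comp (Filter.tendsto_add_atTop_nat 1)
  have hform : ∀ N : ℕ, ∑ i ∈ Finset.range (N + 1), (i : ℝ) * q l i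
      = l * ((q l 0 - q l N) + (q l 1 - q l (N + 1))) := by
    intro N
    rw [Finset.sum_range_succ']
    simp only [Nat.cast_zero, zero_mul, add_zero]
    have step : ∀ i : ℕ, ((i + 1 : ℕ) : ℝ) * q l (i + 1)
        = l * ((q l i - q l (i + 1)) + (q l (i + 1) - q l (i + 2))) := by
      intro i
      have h := q_rec hl i
      push_cast
      linarith [h]
    calc ∑ i ∈ Finset.range N, ((i + 1 : ℕ) : ℝ) * q l (i + 1)
        = ∑ i ∈ Finset.range N, (l * ((q l i - q l (i + 1)) + (q l (i + 1) - q l (i + 2)))) :=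
          Finset.sum_congr rfl fun i _ => step i
      _ = l * ((q l 0 - q l N) + (q l 1 - q l (N + 1))) := by
          rw [← Finset.mul_sum, Finset.sum_add_distrib, Finset.sum_range_sub' (fun i => q l i),
            Finset.sum_range_sub' (fun i => q l (i + 1))]
  have hq0 : Filter.Tendsto (fun N : ℕ => q l N) Filter.atTop (nhds 0) :=
    (summable_q hl).tendsto_atTop_zero
  have h2 : Filter.Tendsto (fun N : ℕ => l * ((q l 0 - q l N) + (q l 1 - q l (N + 1))))
      Filter.atTop (nhds (l * ((q l 0 - 0) + (q l 1 - 0)))) := by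
    apply Filter.Tendsto.const_mul
    exact ((tendsto_const_nhds.sub hq0).add
      (tendsto_const_nhds.sub (hq0.comp (Filter.tendsto_add_atTop_nat 1))))
  simp only [sub_zero] at h2
  have := tendsto_nhds_unique (h1.congr' (Filter.Eventually.of_forall fun N => (hform N)))
    h2
  linarith [this]


lemma summable_S1 (hl : 0 ≤ l) :
    Summable (fun x : ℕ × ℕ => ((x.1 : ℝ) * p l x.1) * p l x.2) :=
  (summable_id_mul_p l).mul_of_nonneg (summable_p l)
    (fun k => mul_nonneg (Nat.cast_nonneg k) (p_nonneg hl k)) (fun k => p_nonneg hl k)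

lemma summable_S2 (hl : 0 ≤ l) :
    Summable (fun x : ℕ × ℕ => p l x.1 * ((x.2 : ℝ) * p l x.2)) :=
  (summable_p l).mul_of_nonneg (summable_id_mul_p l)
    (fun k => p_nonneg hl k) (fun k => mul_nonneg (Nat.cast_nonneg k) (p_nonneg hl k))

lemma tsum_S1 (hl : 0 ≤ l) : ∑' x : ℕ × ℕ, ((x.1 : ℝ) * p l x.1) * p l x.2 = l := by
  rw [(summable_S1 hl).tsum_prod]
  have : ∀ a : ℕ, ∑' b : ℕ, ((a : ℝ) * p l a) * p l b = (a : ℝ) * p l a := by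
    intro a; rw [tsum_mul_left, tsum_p, mul_one]
  rw [tsum_congr this, tsum_id_mul_p]

lemma tsum_S2 (hl : 0 ≤ l) : ∑' x : ℕ × ℕ, p l x.1 * ((x.2 : ℝ) * p l x.2) = l := by
  rw [(summable_S2 hl).tsum_prod]
  have : ∀ a : ℕ, ∑' b : ℕ, p l a * ((b : ℝ) * p l b) = p l a * l := by
    intro a; rw [tsum_mul_left, tsum_id_mul_p]
  rw [tsum_congr this]
  simp_rw [mul_comm (p l _) l]
  rw [tsum_mul_left, tsum_p, mul_one]

lemma abs_cast_sub_le (a b : ℕ) : |(a : ℝ) - (b : ℝ)| ≤ (a : ℝ) + (b : ℝ) := by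
  rw [abs_le]
  constructor <;> [nlinarith [Nat.cast_nonneg (α := ℝ) a, Nat.cast_nonneg (α := ℝ) b];
    nlinarith [Nat.cast_nonneg (α := ℝ) b]]

lemma summable_D (hl : 0 ≤ l) :
    Summable (fun x : ℕ × ℕ => |(x.1 : ℝ) - (x.2 : ℝ)| * (p l x.1 * p l x.2)) := by
  refine Summable.of_nonneg_of_le
    (fun x => mul_nonneg (abs_nonneg _) (mul_nonneg (p_nonneg hl _) (p_nonneg hl _)))
    (fun x => ?_) ((summable_S1 hl).add (summable_S2 hl))
  have h1 := abs_cast_sub_le x.1 x.2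
  have h2 : 0 ≤ p l x.1 * p l x.2 := mul_nonneg (p_nonneg hl _) (p_nonneg hl _)
  nlinarith

lemma tsum_Dgt (hl : 0 ≤ l) :
    ∑' x : ℕ × ℕ, (if x.2 < x.1 then |(x.1 : ℝ) - (x.2 : ℝ)| * (p l x.1 * p l x.2) else 0)
      = ∑' n : ℕ, (n : ℝ) * q l n := by
  set f : ℕ × ℕ → ℝ :=
    fun x => if x.2 < x.1 then |(x.1 : ℝ) - (x.2 : ℝ)| * (p l x.1 * p l x.2) else 0 with hf
  have hi : Function.Injective (fun y : ℕ × ℕ => ((y.2 + y.1 + 1, y.2) : ℕ × ℕ)) := by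
    rintro ⟨a, b⟩ ⟨c, d⟩ h
    simp only [Prod.mk.injEq] at h ⊢
    omega
  have hsupp : Function.support f ⊆ Set.range (fun y : ℕ × ℕ => ((y.2 + y.1 + 1, y.2) : ℕ × ℕ)) := by
    intro x hx
    simp only [Function.mem_support, hf] at hx
    have hlt : x.2 < x.1 := by by_contra h; simp [h] at hx
    refine ⟨(x.1 - x.2 - 1, x.2), ?_⟩
    have he : x.2 + (x.1 - x.2 - 1) + 1 = x.1 := by omega
    simp [Prod.ext_iff, he]
  have h1 := hi.tsum_eq (f := f) hsupp
  rw [← h1]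
  have h2 : ∀ y : ℕ × ℕ, f (y.2 + y.1 + 1, y.2)
      = (((y.1 + 1 : ℕ)) : ℝ) * (p l ((y.1 + 1) + y.2) * p l y.2) := by
    intro y
    simp only [hf]
    rw [if_pos (by omega)]
    have hidx : y.2 + y.1 + 1 = (y.1 + 1) + y.2 := by omega
    rw [hidx]
    have habs : |((((y.1 + 1) + y.2 : ℕ)) : ℝ) - (y.2 : ℝ)| = ((y.1 + 1 : ℕ) : ℝ) := by
      rw [abs_of_nonneg] <;> push_cast <;> [ring; linarith]
    rw [habs]
  rw [tsum_congr h2]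
  set g : ℕ × ℕ → ℝ := fun x => (x.1 : ℝ) * (p l (x.1 + x.2) * p l x.2) with hg
  have hj : Function.Injective (fun y : ℕ × ℕ => ((y.1 + 1, y.2) : ℕ × ℕ)) := by
    rintro ⟨a, b⟩ ⟨c, d⟩ h
    simp only [Prod.mk.injEq] at h ⊢
    omega
  have hjsupp : Function.support g ⊆ Set.range (fun y : ℕ × ℕ => ((y.1 + 1, y.2) : ℕ × ℕ)) := by
    intro x hx
    simp only [Function.mem_support, hg] at hx
    refine ⟨(x.1 - 1, x.2), ?_⟩
    have hx1 : x.1 ≠ 0 := fun h0 => hx (by simp [h0])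
    have he : x.1 - 1 + 1 = x.1 := by omega
    simp [Prod.ext_iff, he]
  have h3 := hj.tsum_eq (f := g) hjsupp
  rw [tsum_nq_eq_tsum_prod hl, ← h3]

lemma tsum_Dlt (hl : 0 ≤ l) :
    ∑' x : ℕ × ℕ, (if x.1 < x.2 then |(x.1 : ℝ) - (x.2 : ℝ)| * (p l x.1 * p l x.2) else 0)
      = ∑' n : ℕ, (n : ℝ) * q l n := by
  set f : ℕ × ℕ → ℝ :=
    fun x => if x.1 < x.2 then |(x.1 : ℝ) - (x.2 : ℝ)| * (p l x.1 * p l x.2) else 0 with hf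
  have hi : Function.Injective (fun y : ℕ × ℕ => ((y.2, y.2 + y.1 + 1) : ℕ × ℕ)) := by
    rintro ⟨a, b⟩ ⟨c, d⟩ h
    simp only [Prod.mk.injEq] at h ⊢
    omega
  have hsupp : Function.support f ⊆ Set.range (fun y : ℕ × ℕ => ((y.2, y.2 + y.1 + 1) : ℕ × ℕ)) := by
    intro x hx
    simp only [Function.mem_support, hf] at hx
    have hlt : x.1 < x.2 := by by_contra h; simp [h] at hx
    refine ⟨(x.2 - x.1 - 1, x.1), ?_⟩
    have he : x.1 + (x.2 - x.1 - 1) + 1 = x.2 := by omega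
    simp [Prod.ext_iff, he]
  have h1 := hi.tsum_eq (f := f) hsupp
  rw [← h1]
  have h2 : ∀ y : ℕ × ℕ, f (y.2, y.2 + y.1 + 1)
      = (((y.1 + 1 : ℕ)) : ℝ) * (p l ((y.1 + 1) + y.2) * p l y.2) := by
    intro y
    simp only [hf]
    rw [if_pos (by omega)]
    have hidx : y.2 + y.1 + 1 = (y.1 + 1) + y.2 := by omega
    rw [hidx]
    have habs : |(y.2 : ℝ) - ((((y.1 + 1) + y.2 : ℕ)) : ℝ)| = ((y.1 + 1 : ℕ) : ℝ) := by
      rw [abs_of_nonpos] <;> push_cast <;> [ring; linarith]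
    rw [habs, mul_comm (p l y.2)]
  rw [tsum_congr h2]
  set g : ℕ × ℕ → ℝ := fun x => (x.1 : ℝ) * (p l (x.1 + x.2) * p l x.2) with hg
  have hj : Function.Injective (fun y : ℕ × ℕ => ((y.1 + 1, y.2) : ℕ × ℕ)) := by
    rintro ⟨a, b⟩ ⟨c, d⟩ h
    simp only [Prod.mk.injEq] at h ⊢
    omega
  have hjsupp : Function.support g ⊆ Set.range (fun y : ℕ × ℕ => ((y.1 + 1, y.2) : ℕ × ℕ)) := by
    intro x hx
    simp only [Function.mem_support, hg] at hx
    refine ⟨(x.1 - 1, x.2), ?_⟩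
    have hx1 : x.1 ≠ 0 := fun h0 => hx (by simp [h0])
    have he : x.1 - 1 + 1 = x.1 := by omega
    simp [Prod.ext_iff, he]
  have h3 := hj.tsum_eq (f := g) hjsupp
  rw [tsum_nq_eq_tsum_prod hl, ← h3]

lemma tsum_D (hl : 0 ≤ l) :
    ∑' x : ℕ × ℕ, |(x.1 : ℝ) - (x.2 : ℝ)| * (p l x.1 * p l x.2)
      = 2 * (l * (q l 0 + q l 1)) := by
  set D : ℕ × ℕ → ℝ := fun x => |(x.1 : ℝ) - (x.2 : ℝ)| * (p l x.1 * p l x.2) with hD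
  have hDnn : ∀ x : ℕ × ℕ, 0 ≤ D x :=
    fun x => mul_nonneg (abs_nonneg _) (mul_nonneg (p_nonneg hl _) (p_nonneg hl _))
  have hDgt : Summable (fun x : ℕ × ℕ => if x.2 < x.1 then D x else 0) := by
    refine Summable.of_nonneg_of_le (fun x => ?_) (fun x => ?_) (summable_D hl)
    · split_ifs with h
      · exact hDnn x
      · exact le_refl 0
    · split_ifs with h
      · exact le_refl (D x)
      · exact hDnn x
  have hDlt : Summable (fun x : ℕ × ℕ => if x.1 < x.2 then D x else 0) := by
    refine Summable.of_nonneg_of_le (fun x => ?_) (fun x => ?_) (summable_D hl)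
    · split_ifs with h
      · exact hDnn x
      · exact le_refl 0
    · split_ifs with h
      · exact le_refl (D x)
      · exact hDnn x
  have key : ∀ x : ℕ × ℕ, D x
      = (if x.2 < x.1 then D x else 0) + (if x.1 < x.2 then D x else 0) := by
    intro x
    rcases Nat.lt_trichotomy x.1 x.2 with h | h | h
    · rw [if_neg (by omega), if_pos h, zero_add]
    · have hz : D x = 0 := by simp [hD, h]
      rw [if_neg (by omega), if_neg (by omega), hz, add_zero]
    · rw [if_pos h, if_neg (by omega), add_zero]
  calc ∑' x : ℕ × ℕ, D x
      = ∑' x : ℕ × ℕ, ((if x.2 < x.1 then D x else 0) + (if x.1 < x.2 then D x else 0)) :=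
        tsum_congr key
    _ = (∑' x : ℕ × ℕ, (if x.2 < x.1 then D x else 0))
        + ∑' x : ℕ × ℕ, (if x.1 < x.2 then D x else 0) := hDgt.tsum_add hDlt
    _ = (∑' n : ℕ, (n : ℝ) * q l n) + ∑' n : ℕ, (n : ℝ) * q l n := by
        rw [tsum_Dgt hl, tsum_Dlt hl]
    _ = 2 * (l * (q l 0 + q l 1)) := by rw [tsum_nq hl]; ring

lemma cast_min (a b : ℕ) :
    ((min a b : ℕ) : ℝ) = ((a : ℝ) + (b : ℝ) - |(a : ℝ) - (b : ℝ)|) / 2 := by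
  rcases le_total a b with h | h
  · have hc : (a : ℝ) ≤ b := Nat.cast_le.2 h
    rw [min_eq_left h, abs_of_nonpos (by linarith)]
    ring
  · have hc : (b : ℝ) ≤ a := Nat.cast_le.2 h
    rw [min_eq_right h, abs_of_nonneg (by linarith)]
    ring

lemma tsum_min (hl : 0 ≤ l) :
    ∑' x : ℕ × ℕ, ((min x.1 x.2 : ℕ) : ℝ) * (p l x.1 * p l x.2)
      = l - l * (q l 0 + q l 1) := by
  have hpt : ∀ x : ℕ × ℕ, ((min x.1 x.2 : ℕ) : ℝ) * (p l x.1 * p l x.2)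
      = (((x.1 : ℝ) * p l x.1) * p l x.2 + p l x.1 * ((x.2 : ℝ) * p l x.2)
        - |(x.1 : ℝ) - (x.2 : ℝ)| * (p l x.1 * p l x.2)) * 2⁻¹ := by
    intro x
    rw [cast_min]
    ring
  rw [tsum_congr hpt, tsum_mul_right,
    ((summable_S1 hl).add (summable_S2 hl)).tsum_sub (summable_D hl),
    (summable_S1 hl).tsum_add (summable_S2 hl), tsum_S1 hl, tsum_S2 hl, tsum_D hl]
  ring


noncomputable def W (n : ℕ) : ℝ := ∫ θ in (0:ℝ)..π, Real.cos θ ^ n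

lemma W_zero : W 0 = π := by simp [W]

lemma W_one : W 1 = 0 := by simp [W]

lemma W_rec (n : ℕ) : W (n + 2) = ((n : ℝ) + 1) / ((n : ℝ) + 2) * W n := by
  unfold W
  rw [integral_cos_pow n]
  simp [Real.sin_pi]

lemma W_odd (m : ℕ) : W (2 * m + 1) = 0 := by
  induction m with
  | zero => simpa using W_one
  | succ k ih =>
    have h : 2 * (k + 1) + 1 = (2 * k + 1) + 2 := by omega
    rw [h, W_rec, ih, mul_zero]

lemma W_even (m : ℕ) :
    W (2 * m) = π * ((2 * m).factorial : ℝ) / (4 ^ m * ((m.factorial : ℝ)) ^ 2) := by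
  induction m with
  | zero => simpa using W_zero
  | succ k ih =>
    have h : 2 * (k + 1) = (2 * k) + 2 := by omega
    rw [h, W_rec, ih]
    have e1 : ((2 * (k + 1)).factorial : ℝ)
        = ((2 * k + 2) : ℝ) * ((2 * k + 1) : ℝ) * ((2 * k).factorial : ℝ) := by
      have : 2 * (k + 1) = (2 * k + 1) + 1 := by omega
      rw [this, Nat.factorial_succ, Nat.factorial_succ]
      push_cast
      ring
    have e2 : (((k + 1).factorial : ℝ)) = ((k : ℝ) + 1) * (k.factorial : ℝ) := by
      rw [Nat.factorial_succ]; push_cast; ring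
    have h24 : 2 * (k + 1) = 2 * k + 2 := by omega
    rw [← h24, e1, e2]
    have hf : ((2 * k).factorial : ℝ) ≠ 0 := Nat.cast_ne_zero.2 (Nat.factorial_ne_zero _)
    have hf2 : (k.factorial : ℝ) ≠ 0 := Nat.cast_ne_zero.2 (Nat.factorial_ne_zero _)
    have h4 : (4 : ℝ) ^ k ≠ 0 := by positivity
    have hk2 : ((2 * k : ℕ) : ℝ) + 2 ≠ 0 := by positivity
    field_simp
    push_cast
    ring

lemma summable_even_series (hl : 0 ≤ l) :
    Summable (fun k : ℕ => l ^ (2 * k) / ((k.factorial : ℝ)) ^ 2) := by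
  refine Summable.of_nonneg_of_le (fun k => by positivity) (fun k => ?_)
    (Real.summable_pow_div_factorial (l ^ 2))
  rw [pow_mul]
  have h1 : (1 : ℝ) ≤ (k.factorial : ℝ) := by exact_mod_cast Nat.one_le_iff_ne_zero.2 k.factorial_ne_zero
  have h2 : (k.factorial : ℝ) ≤ ((k.factorial : ℝ)) ^ 2 := by nlinarith
  apply div_le_div_of_nonneg_left ?_ ?_ h2 |>.trans_eq rfl
  · positivity
  · positivity

lemma summable_odd_series (hl : 0 ≤ l) :
    Summable (fun k : ℕ => l ^ (2 * k + 1) / ((k.factorial : ℝ) * (((k + 1).factorial : ℝ)))) := by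
  refine Summable.of_nonneg_of_le (fun k => by positivity) (fun k => ?_)
    ((Real.summable_pow_div_factorial (l ^ 2)).mul_left l)
  rw [pow_succ, pow_mul, mul_comm ((l ^ 2) ^ k) l, mul_div_assoc]
  have h1 : (1 : ℝ) ≤ (((k + 1).factorial : ℝ)) := by
    exact_mod_cast Nat.one_le_iff_ne_zero.2 (k + 1).factorial_ne_zero
  have h2 : (k.factorial : ℝ) ≤ (k.factorial : ℝ) * ((k + 1).factorial : ℝ) := by
    nlinarith [(Nat.cast_pos (α := ℝ)).2 k.factorial_pos]
  have h3 : (l ^ 2) ^ k / ((k.factorial : ℝ) * ((k + 1).factorial : ℝ))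
      ≤ (l ^ 2) ^ k / (k.factorial : ℝ) := by
    apply div_le_div_of_nonneg_left ?_ ?_ h2
    · positivity
    · exact_mod_cast k.factorial_pos
  exact mul_le_mul_of_nonneg_left h3 hl

lemma tsum_exp_real (x : ℝ) : ∑' n : ℕ, x ^ n / (n.factorial : ℝ) = Real.exp x := by
  rw [Real.exp_eq_exp_ℝ, NormedSpace.exp_eq_tsum_div]

lemma hasSum_exp_real (x : ℝ) :
    HasSum (fun n : ℕ => x ^ n / (n.factorial : ℝ)) (Real.exp x) :=
  (Real.summable_pow_div_factorial x).hasSum_iff.2 (tsum_exp_real x)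

lemma series_int (hl : 0 ≤ l) :
    ∫ θ in (0:ℝ)..π, Real.exp (2 * l * Real.cos θ) * (1 + Real.cos θ)
      = ∑' n : ℕ, ((2 * l) ^ n / (n.factorial : ℝ)) * (W n + W (n + 1)) := by
  set F : ℕ → ℝ → ℝ :=
    fun n θ => ((2 * l) ^ n / (n.factorial : ℝ)) * (Real.cos θ ^ n * (1 + Real.cos θ)) with hF
  have hcont : ∀ n, Continuous (F n) := by
    intro n; apply Continuous.mul continuous_const
    exact (Real.continuous_cos.pow n).mul (continuous_const.add Real.continuous_cos)
  have hpt : ∀ θ : ℝ, ∑' n, F n θ = Real.exp (2 * l * Real.cos θ) * (1 + Real.cos θ) := by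
    intro θ
    have h1 := (hasSum_exp_real (2 * l * Real.cos θ)).mul_right (1 + Real.cos θ)
    have h2 : (fun n : ℕ => (2 * l * Real.cos θ) ^ n / (n.factorial : ℝ) * (1 + Real.cos θ))
        = fun n => F n θ := by
      funext n
      rw [hF, mul_pow]
      ring
    rw [← h2]
    exact h1.tsum_eq
  have hint : ∀ n : ℕ, IntegrableOn (F n) (Set.Ioc 0 π) := fun n =>
    (hcont n).integrableOn_Ioc
  have hnorm : Summable (fun n : ℕ => ∫ θ in Set.Ioc (0:ℝ) π, ‖F n θ‖) := by
    refine Summable.of_nonneg_of_le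
      (fun n => integral_nonneg fun θ => norm_nonneg _) (fun n => ?_)
      (((Real.summable_pow_div_factorial (2 * l)).mul_right (2 * π)))
    have hb : ∀ θ ∈ Set.Ioc (0:ℝ) π, ‖F n θ‖ ≤ (2 * l) ^ n / (n.factorial : ℝ) * 2 := by
      intro θ _
      rw [hF]
      simp only [Real.norm_eq_abs]
      rw [abs_mul]
      have h1 : |Real.cos θ ^ n| ≤ 1 := by
        rw [abs_pow]; exact pow_le_one₀ (abs_nonneg _) (Real.abs_cos_le_one θ)
      have h2 : |1 + Real.cos θ| ≤ 2 := by
        have ha := Real.neg_one_le_cos θ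
        have hb2 := Real.cos_le_one θ
        rw [abs_le]; constructor <;> linarith
      have hc : |Real.cos θ ^ n * (1 + Real.cos θ)| ≤ 2 := by
        rw [abs_mul]
        nlinarith [abs_nonneg (Real.cos θ ^ n), abs_nonneg (1 + Real.cos θ)]
      have hpos : |(2 * l) ^ n / (n.factorial : ℝ)| = (2 * l) ^ n / (n.factorial : ℝ) := by
        rw [abs_of_nonneg]; positivity
      rw [hpos]
      exact mul_le_mul_of_nonneg_left hc (by positivity)
    have hmono : ∫ θ in Set.Ioc (0:ℝ) π, ‖F n θ‖
        ≤ ∫ _θ in Set.Ioc (0:ℝ) π, ((2 * l) ^ n / (n.factorial : ℝ) * 2) :=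
      setIntegral_mono_on (hint n).norm
        (integrableOn_const (by rw [Real.volume_Ioc]; exact ENNReal.ofReal_ne_top))
        measurableSet_Ioc hb
    have hconst : ∫ _θ in Set.Ioc (0:ℝ) π, ((2 * l) ^ n / (n.factorial : ℝ) * 2)
        = ((2 * l) ^ n / (n.factorial : ℝ)) * (2 * π) := by
      rw [setIntegral_const, measureReal_def, Real.volume_Ioc, smul_eq_mul,
        ENNReal.toReal_ofReal (by linarith [Real.pi_pos] : (0:ℝ) ≤ π - 0)]
      ring
    exact hmono.trans hconst.le
  have hinterchange := integral_tsum_of_summable_integral_norm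
    (μ := (volume : Measure ℝ).restrict (Set.Ioc 0 π)) (fun n => hint n) hnorm
  rw [intervalIntegral.integral_of_le Real.pi_pos.le]
  have hG : ∀ θ : ℝ, Real.exp (2 * l * Real.cos θ) * (1 + Real.cos θ) = ∑' n, F n θ :=
    fun θ => (hpt θ).symm
  calc ∫ θ in Set.Ioc (0:ℝ) π, Real.exp (2 * l * Real.cos θ) * (1 + Real.cos θ)
      = ∫ θ in Set.Ioc (0:ℝ) π, ∑' n, F n θ := by
        apply integral_congr_ae
        filter_upwards with θ using hG θ
    _ = ∑' n, ∫ θ in Set.Ioc (0:ℝ) π, F n θ := hinterchange.symm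
    _ = ∑' n : ℕ, ((2 * l) ^ n / (n.factorial : ℝ)) * (W n + W (n + 1)) := by
        refine tsum_congr fun n => ?_
        rw [← intervalIntegral.integral_of_le Real.pi_pos.le]
        have : ∫ θ in (0:ℝ)..π, F n θ
            = ((2 * l) ^ n / (n.factorial : ℝ))
              * ∫ θ in (0:ℝ)..π, (Real.cos θ ^ n + Real.cos θ ^ (n + 1)) := by
          rw [← intervalIntegral.integral_const_mul]
          apply intervalIntegral.integral_congr
          intro θ _
          simp only [hF]
          ring
        rw [this, intervalIntegral.integral_add (f := fun θ => Real.cos θ ^ n) (g := fun θ => Real.cos θ ^ (n + 1))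
          ((Real.continuous_cos.pow n).intervalIntegrable _ _)
          ((Real.continuous_cos.pow (n + 1)).intervalIntegrable _ _)]
        rfl


lemma arith_even (k : ℕ) :
    ((2 * l) ^ (2 * k) / (((2 * k).factorial : ℝ))) * (W (2 * k) + W (2 * k + 1))
      = π * (l ^ (2 * k) / ((k.factorial : ℝ)) ^ 2) := by
  rw [W_odd k, W_even k, add_zero]
  have hp : (2 * l) ^ (2 * k) = 4 ^ k * l ^ (2 * k) := by
    rw [pow_mul, (by ring : (2 * l) ^ 2 = 4 * l ^ 2), mul_pow, ← pow_mul]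
  rw [hp]
  have h1 : (((2 * k).factorial : ℝ)) ≠ 0 := Nat.cast_ne_zero.2 (Nat.factorial_ne_zero _)
  have h2 : ((k.factorial : ℝ)) ≠ 0 := Nat.cast_ne_zero.2 (Nat.factorial_ne_zero _)
  have h3 : (4 : ℝ) ^ k ≠ 0 := by positivity
  field_simp

lemma arith_odd (k : ℕ) :
    ((2 * l) ^ (2 * k + 1) / (((2 * k + 1).factorial : ℝ))) * (W (2 * k + 1) + W (2 * k + 1 + 1))
      = π * (l ^ (2 * k + 1) / ((k.factorial : ℝ) * (((k + 1).factorial : ℝ)))) := by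
  have hidx : 2 * k + 1 + 1 = 2 * (k + 1) := by omega
  rw [W_odd k, hidx, W_even (k + 1), zero_add]
  have hp : (2 * l) ^ (2 * k + 1) = 2 * (4 ^ k * l ^ (2 * k + 1)) := by
    rw [pow_succ, pow_mul, (by ring : (2 * l) ^ 2 = 4 * l ^ 2), mul_pow, ← pow_mul]
    ring
  rw [hp]
  have e1 : (((2 * (k + 1)).factorial : ℝ)) = (2 * (k : ℝ) + 2) * (((2 * k + 1).factorial : ℝ)) := by
    have h : 2 * (k + 1) = (2 * k + 1) + 1 := by omega
    rw [h, Nat.factorial_succ]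
    push_cast
    ring
  have e2 : (((k + 1).factorial : ℝ)) = ((k : ℝ) + 1) * (k.factorial : ℝ) := by
    rw [Nat.factorial_succ]
    push_cast
    ring
  rw [e1, e2]
  have h1 : (((2 * k + 1).factorial : ℝ)) ≠ 0 := Nat.cast_ne_zero.2 (Nat.factorial_ne_zero _)
  have h2 : ((k.factorial : ℝ)) ≠ 0 := Nat.cast_ne_zero.2 (Nat.factorial_ne_zero _)
  have h3 : (4 : ℝ) ^ (k + 1) ≠ 0 := by positivity
  have h4 : ((k : ℝ) + 1) ≠ 0 := by positivity
  have h5 : (2 * (k : ℝ) + 2) ≠ 0 := by positivity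
  rw [pow_succ]
  field_simp
  ring

lemma tsum_c_eval (hl : 0 ≤ l) :
    ∑' n : ℕ, ((2 * l) ^ n / (n.factorial : ℝ)) * (W n + W (n + 1))
      = π * ((∑' k : ℕ, l ^ (2 * k) / ((k.factorial : ℝ)) ^ 2)
        + ∑' k : ℕ, l ^ (2 * k + 1) / ((k.factorial : ℝ) * (((k + 1).factorial : ℝ)))) := by
  set c : ℕ → ℝ := fun n => ((2 * l) ^ n / (n.factorial : ℝ)) * (W n + W (n + 1)) with hc
  have he : ∀ k : ℕ, c (2 * k) = π * (l ^ (2 * k) / ((k.factorial : ℝ)) ^ 2) := fun k => arith_even k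
  have ho : ∀ k : ℕ, c (2 * k + 1)
      = π * (l ^ (2 * k + 1) / ((k.factorial : ℝ) * (((k + 1).factorial : ℝ)))) := fun k =>
    arith_odd k
  have hse : Summable (fun k => c (2 * k)) := by
    rw [funext he]
    exact (summable_even_series hl).mul_left π
  have hso : Summable (fun k => c (2 * k + 1)) := by
    rw [funext ho]
    exact (summable_odd_series hl).mul_left π
  rw [← tsum_even_add_odd hse hso, tsum_congr he, tsum_congr ho, tsum_mul_left, tsum_mul_left,
    mul_add]

lemma q_zero_eq (hl : 0 ≤ l) :
    q l 0 = Real.exp (-(2 * l)) * ∑' k : ℕ, l ^ (2 * k) / ((k.factorial : ℝ)) ^ 2 := by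
  unfold q
  rw [← tsum_mul_left]
  refine tsum_congr fun k => ?_
  unfold p
  rw [zero_add]
  rw [div_mul_div_comm]
  have h1 : Real.exp (-l) * l ^ k * (Real.exp (-l) * l ^ k)
      = Real.exp (-l + -l) * l ^ (2 * k) := by
    rw [Real.exp_add, two_mul, pow_add]
    ring
  rw [h1]
  have h2 : -l + -l = -(2 * l) := by ring
  rw [h2, mul_div_assoc]
  congr 1
  push_cast
  ring

lemma q_one_eq (hl : 0 ≤ l) :
    q l 1 = Real.exp (-(2 * l))
      * ∑' k : ℕ, l ^ (2 * k + 1) / ((k.factorial : ℝ) * (((k + 1).factorial : ℝ))) := by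
  unfold q
  rw [← tsum_mul_left]
  refine tsum_congr fun k => ?_
  unfold p
  have hidx : 1 + k = k + 1 := by omega
  rw [hidx]
  rw [div_mul_div_comm]
  have h1 : Real.exp (-l) * l ^ (k + 1) * (Real.exp (-l) * l ^ k)
      = Real.exp (-l + -l) * l ^ (2 * k + 1) := by
    rw [Real.exp_add]
    have : l ^ (k + 1) * l ^ k = l ^ (2 * k + 1) := by
      rw [← pow_add]
      congr 1
      omega
    calc Real.exp (-l) * l ^ (k + 1) * (Real.exp (-l) * l ^ k)
        = Real.exp (-l) * Real.exp (-l) * (l ^ (k + 1) * l ^ k) := by ring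
      _ = Real.exp (-l) * Real.exp (-l) * l ^ (2 * k + 1) := by rw [this]
  rw [h1]
  have h2 : -l + -l = -(2 * l) := by ring
  rw [h2, mul_div_assoc]
  congr 2
  rw [mul_comm]

lemma q01_integral (hl : 0 ≤ l) :
    q l 0 + q l 1 = Real.exp (-(2 * l)) * (π⁻¹ *
      ∫ θ in (0:ℝ)..π, Real.exp (2 * l * Real.cos θ) * (1 + Real.cos θ)) := by
  rw [q_zero_eq hl, q_one_eq hl, series_int hl, tsum_c_eval hl, ← mul_add]
  have hπ : (π : ℝ) ≠ 0 := Real.pi_ne_zero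
  field_simp


lemma subst_integral (l : ℝ) :
    ∫ θ in (0:ℝ)..π, Real.exp (-(2*l) * (1 - Real.cos θ)) * (1 + Real.cos θ)
      = ∫ t in (0:ℝ)..1, 4 * (Real.sqrt (1 - t^2) * Real.exp (-(4*l) * t^2)) := by
  set g : ℝ → ℝ := fun t => 4 * (Real.sqrt (1 - t^2) * Real.exp (-(4*l) * t^2)) with hg
  have hgc : Continuous g := by
    apply continuous_const.mul
    apply Continuous.mul
    · exact Real.continuous_sqrt.comp (by continuity)
    · exact Real.continuous_exp.comp (by continuity)
  have hder : ∀ θ ∈ Set.uIcc (0:ℝ) π,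
      HasDerivAt (fun y : ℝ => Real.sin (y / 2)) (Real.cos (θ / 2) * (1/2)) θ := by
    intro θ _
    have h1 : HasDerivAt (fun y : ℝ => y / 2) (1/2 : ℝ) θ := (hasDerivAt_id θ).div_const 2
    have h2 := (Real.hasDerivAt_sin (θ / 2)).comp θ h1
    exact h2
  have h := intervalIntegral.integral_comp_smul_deriv hder
    (Continuous.continuousOn (by continuity)) hgc
  have hfa : Real.sin ((0:ℝ) / 2) = 0 := by norm_num
  have hfb : Real.sin (π / 2) = 1 := Real.sin_pi_div_two
  rw [hfa, hfb] at h
  rw [← h]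
  apply intervalIntegral.integral_congr
  intro θ hθ
  rw [Set.uIcc_of_le Real.pi_pos.le] at hθ
  obtain ⟨h0, hπ⟩ := hθ
  have hhalf : θ / 2 ∈ Set.Icc (-(π/2)) (π/2) := by
    constructor <;> [linarith [Real.pi_pos]; linarith]
  have hcosnn : 0 ≤ Real.cos (θ / 2) := Real.cos_nonneg_of_mem_Icc hhalf
  have h2θ : 2 * (θ / 2) = θ := by ring
  have hsin2 : Real.sin (θ / 2) ^ 2 = (1 - Real.cos θ) / 2 := by
    rw [Real.sin_sq_eq_half_sub, h2θ]; ring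
  have hcos2 : Real.cos (θ / 2) ^ 2 = (1 + Real.cos θ) / 2 := by
    rw [Real.cos_sq, h2θ]; ring
  have hsqrt : Real.sqrt (1 - Real.sin (θ / 2) ^ 2) = Real.cos (θ / 2) := by
    have h1 : 1 - Real.sin (θ / 2) ^ 2 = Real.cos (θ / 2) ^ 2 := by
      have := Real.sin_sq_add_cos_sq (θ / 2)
      linarith
    rw [h1, Real.sqrt_sq hcosnn]
  simp only [smul_eq_mul, Function.comp, hg]
  rw [hsqrt]
  have hexp : -(4*l) * Real.sin (θ / 2) ^ 2 = -(2*l) * (1 - Real.cos θ) := by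
    rw [hsin2]; ring
  rw [hexp]
  have hcc : Real.cos (θ / 2) * Real.cos (θ / 2) = (1 + Real.cos θ) / 2 := by
    rw [← sq, hcos2]
  calc Real.exp (-(2*l) * (1 - Real.cos θ)) * (1 + Real.cos θ)
      = (Real.cos (θ / 2) * Real.cos (θ / 2)) * (2 * Real.exp (-(2*l) * (1 - Real.cos θ))) := by
        rw [hcc]; ring
    _ = Real.cos (θ / 2) * (1/2) * (4 * (Real.cos (θ / 2) * Real.exp (-(2*l) * (1 - Real.cos θ)))) := by
        ring

lemma exp_neg_two_le (l : ℝ) (hl : 1 ≤ l) : Real.exp (-(2*l)) ≤ 1 / l^2 := by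
  have h1 : l + 1 ≤ Real.exp l := by linarith [Real.add_one_le_exp l]
  have h2 : l^2 ≤ Real.exp (2*l) := by
    have : Real.exp (2*l) = Real.exp l * Real.exp l := by rw [← Real.exp_add]; ring_nf
    nlinarith [Real.exp_pos l]
  rw [Real.exp_neg, one_div]
  exact inv_anti₀ (by positivity) h2


lemma sqrt_four_mul (l : ℝ) (hl : 0 ≤ l) : Real.sqrt (4 * l) = 2 * Real.sqrt l := by
  rw [show (4:ℝ) * l = 2^2 * l by ring, Real.sqrt_mul (by positivity), Real.sqrt_sq (by norm_num)]

lemma gauss_est (l : ℝ) (hl : 1 ≤ l) :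
    |(∫ t in (0:ℝ)..1, 4 * (Real.sqrt (1 - t^2) * Real.exp (-(4*l) * t^2)))
      - Real.sqrt π / Real.sqrt l| ≤ 6 / (l * Real.sqrt l) := by
  have hl0 : (0:ℝ) < l := by linarith
  have hsl : (0:ℝ) < Real.sqrt l := Real.sqrt_pos.2 hl0
  set G : ℝ → ℝ := fun t => Real.exp (-(4*l) * t^2) with hG
  set S : ℝ → ℝ := fun t => Real.sqrt (1 - t^2) * Real.exp (-(4*l) * t^2) with hS
  have hGint : Integrable G := integrable_exp_neg_mul_sq (by positivity : (0:ℝ) < 4*l)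
  have hG2int : Integrable (fun t : ℝ => Real.exp (-(2*l) * t^2)) :=
    integrable_exp_neg_mul_sq (by positivity : (0:ℝ) < 2*l)
  have hScont : Continuous S := by
    apply Continuous.mul
    · exact Real.continuous_sqrt.comp (by continuity)
    · exact Real.continuous_exp.comp (by continuity)
  have hSint : IntegrableOn S (Set.Ioc 0 1) := hScont.integrableOn_Ioc
  have hgauss4 : ∫ t in Set.Ioi (0:ℝ), G t = Real.sqrt π / Real.sqrt l / 4 := by
    rw [hG, integral_gaussian_Ioi, Real.sqrt_div Real.pi_pos.le, sqrt_four_mul l hl0.le,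
      div_div, div_div]
    congr 1
    ring
  have hgauss2_le : ∫ t in Set.Ioi (0:ℝ), Real.exp (-(2*l) * t^2) ≤ 1 / Real.sqrt l := by
    rw [integral_gaussian_Ioi]
    have h1 : π / (2*l) ≤ 4 / l := by
      rw [div_le_div_iff₀ (by positivity) hl0]
      nlinarith [Real.pi_le_four]
    have h2 : Real.sqrt (π / (2*l)) ≤ Real.sqrt (4 / l) := Real.sqrt_le_sqrt h1
    have h3 : Real.sqrt (4 / l) = 2 / Real.sqrt l := by
      rw [Real.sqrt_div (by norm_num : (0:ℝ) ≤ 4), show Real.sqrt 4 = 2 by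
        rw [show (4:ℝ) = 2^2 by norm_num, Real.sqrt_sq (by norm_num)]]
    rw [h3] at h2
    calc Real.sqrt (π / (2*l)) / 2 ≤ (2 / Real.sqrt l) / 2 := by gcongr
      _ = 1 / Real.sqrt l := by ring
  have hdisj : Disjoint (Set.Ioc (0:ℝ) 1) (Set.Ioi 1) := by
    rw [Set.disjoint_left]
    rintro x ⟨_, hx1⟩ hx2
    exact absurd (Set.mem_Ioi.1 hx2) (not_lt.2 hx1)
  have hIsplit : ∫ t in Set.Ioi (0:ℝ), G t
      = (∫ t in Set.Ioc (0:ℝ) 1, G t) + ∫ t in Set.Ioi (1:ℝ), G t := by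
    rw [← setIntegral_union hdisj measurableSet_Ioi hGint.integrableOn hGint.integrableOn,
      Set.Ioc_union_Ioi_eq_Ioi zero_le_one]
  -- pointwise bound on Ioc 0 1
  have hpt : ∀ t ∈ Set.Ioc (0:ℝ) 1, G t - S t ≤ 1/(2*l) * Real.exp (-(2*l) * t^2) := by
    rintro t ⟨ht0, ht1⟩
    have h1 : (0:ℝ) ≤ 1 - t^2 := by nlinarith
    have hs1 : Real.sqrt (1 - t^2) ≤ 1 := Real.sqrt_le_one.mpr (by nlinarith)
    have hsq := Real.sq_sqrt h1
    have hs2 : 1 - t^2 ≤ Real.sqrt (1 - t^2) := by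
      nlinarith [Real.sqrt_nonneg (1 - t^2)]
    have h2 : 1 - Real.sqrt (1 - t^2) ≤ t^2 := by linarith
    have hesplit : Real.exp (-(4*l) * t^2)
        = Real.exp (-(2*l) * t^2) * Real.exp (-(2*l) * t^2) := by
      rw [← Real.exp_add]
      congr 1
      ring
    have h3 : t^2 * Real.exp (-(2*l) * t^2) ≤ 1/(2*l) := by
      have hneg : -(2*l) * t^2 = -(2*l*t^2) := by ring
      rw [hneg, Real.exp_neg, ← div_eq_mul_inv, div_le_div_iff₀ (Real.exp_pos _) (by positivity)]
      have := Real.add_one_le_exp (2*l*t^2)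
      nlinarith
    have hGS : G t - S t = (1 - Real.sqrt (1 - t^2)) * Real.exp (-(4*l) * t^2) := by
      rw [hG, hS]
      ring
    rw [hGS, hesplit]
    have hexp2 : (0:ℝ) ≤ Real.exp (-(2*l) * t^2) := (Real.exp_pos _).le
    calc (1 - Real.sqrt (1 - t^2)) * (Real.exp (-(2*l) * t^2) * Real.exp (-(2*l) * t^2))
        ≤ t^2 * (Real.exp (-(2*l) * t^2) * Real.exp (-(2*l) * t^2)) := by
          apply mul_le_mul_of_nonneg_right h2 (by positivity)
      _ = (t^2 * Real.exp (-(2*l) * t^2)) * Real.exp (-(2*l) * t^2) := by ring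
      _ ≤ 1/(2*l) * Real.exp (-(2*l) * t^2) := mul_le_mul_of_nonneg_right h3 hexp2
  have hSG_mono : ∫ t in Set.Ioc (0:ℝ) 1, S t ≤ ∫ t in Set.Ioc (0:ℝ) 1, G t := by
    apply setIntegral_mono_on hSint hGint.integrableOn measurableSet_Ioc
    rintro t ⟨ht0, ht1⟩
    rw [hS, hG]
    exact mul_le_of_le_one_left (Real.exp_pos _).le (Real.sqrt_le_one.mpr (by nlinarith))
  have hdiff : (∫ t in Set.Ioc (0:ℝ) 1, G t) - (∫ t in Set.Ioc (0:ℝ) 1, S t)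
      ≤ 1/(2*l) * (1/Real.sqrt l) := by
    have e1 : (∫ t in Set.Ioc (0:ℝ) 1, G t) - (∫ t in Set.Ioc (0:ℝ) 1, S t)
        = ∫ t in Set.Ioc (0:ℝ) 1, (G t - S t) :=
      (integral_sub hGint.integrableOn hSint).symm
    rw [e1]
    have e2 : ∫ t in Set.Ioc (0:ℝ) 1, (G t - S t)
        ≤ ∫ t in Set.Ioc (0:ℝ) 1, 1/(2*l) * Real.exp (-(2*l) * t^2) := by
      apply setIntegral_mono_on (hGint.integrableOn.sub hSint)
        ((hG2int.const_mul _).integrableOn) measurableSet_Ioc hpt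
    have e3 : ∫ t in Set.Ioc (0:ℝ) 1, 1/(2*l) * Real.exp (-(2*l) * t^2)
        = 1/(2*l) * ∫ t in Set.Ioc (0:ℝ) 1, Real.exp (-(2*l) * t^2) := integral_const_mul _ _
    have e4 : ∫ t in Set.Ioc (0:ℝ) 1, Real.exp (-(2*l) * t^2)
        ≤ ∫ t in Set.Ioi (0:ℝ), Real.exp (-(2*l) * t^2) := by
      apply setIntegral_mono_set hG2int.integrableOn
        (Filter.Eventually.of_forall fun t => (Real.exp_pos _).le)
        (Filter.Eventually.of_forall ?_)
      intro t ht
      exact Set.Ioc_subset_Ioi_self ht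
    have e5 := hgauss2_le
    have h2l : (0:ℝ) < 1/(2*l) := by positivity
    calc ∫ t in Set.Ioc (0:ℝ) 1, (G t - S t)
        ≤ 1/(2*l) * ∫ t in Set.Ioc (0:ℝ) 1, Real.exp (-(2*l) * t^2) := by rw [← e3]; exact e2
      _ ≤ 1/(2*l) * (1/Real.sqrt l) := by
          apply mul_le_mul_of_nonneg_left (e4.trans e5) h2l.le
  have htail : ∫ t in Set.Ioi (1:ℝ), G t ≤ 1/(l * Real.sqrt l) := by
    have b2 : ∀ t ∈ Set.Ioi (1:ℝ), G t ≤ Real.exp (-(2*l)) * Real.exp (-(2*l) * t^2) := by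
      intro t ht
      have ht1 : (1:ℝ) < t := Set.mem_Ioi.1 ht
      rw [hG, ← Real.exp_add]
      apply Real.exp_le_exp.2
      have ht2 : (1:ℝ) ≤ t^2 := by nlinarith
      nlinarith [mul_le_mul_of_nonneg_left ht2 (by positivity : (0:ℝ) ≤ 2*l)]
    have i1 : ∫ t in Set.Ioi (1:ℝ), G t
        ≤ ∫ t in Set.Ioi (1:ℝ), Real.exp (-(2*l)) * Real.exp (-(2*l) * t^2) := by
      apply setIntegral_mono_on (hGint.integrableOn)
        ((hG2int.const_mul _).integrableOn) measurableSet_Ioi b2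
    have i2 : ∫ t in Set.Ioi (1:ℝ), Real.exp (-(2*l)) * Real.exp (-(2*l) * t^2)
        = Real.exp (-(2*l)) * ∫ t in Set.Ioi (1:ℝ), Real.exp (-(2*l) * t^2) :=
      integral_const_mul _ _
    have i3 : ∫ t in Set.Ioi (1:ℝ), Real.exp (-(2*l) * t^2)
        ≤ ∫ t in Set.Ioi (0:ℝ), Real.exp (-(2*l) * t^2) := by
      apply setIntegral_mono_set hG2int.integrableOn
        (Filter.Eventually.of_forall fun t => (Real.exp_pos _).le)
        (Filter.Eventually.of_forall ?_)
      intro t ht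
      exact Set.Ioi_subset_Ioi zero_le_one (show t ∈ Set.Ioi (1:ℝ) from ht)
    have i4 := exp_neg_two_le l hl
    have hexpnn : (0:ℝ) ≤ Real.exp (-(2*l)) := (Real.exp_pos _).le
    have i5 : ∫ t in Set.Ioi (1:ℝ), Real.exp (-(2*l) * t^2) ≤ 1/Real.sqrt l :=
      i3.trans hgauss2_le
    have i6 : Real.exp (-(2*l)) * ∫ t in Set.Ioi (1:ℝ), Real.exp (-(2*l) * t^2)
        ≤ (1/l^2) * (1/Real.sqrt l) := by
      apply mul_le_mul i4 i5 ?_ (by positivity)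
      apply setIntegral_nonneg measurableSet_Ioi
      intro t _
      exact (Real.exp_pos _).le
    have i7 : (1/l^2) * (1/Real.sqrt l) ≤ 1/(l * Real.sqrt l) := by
      rw [div_mul_div_comm, one_mul]
      apply div_le_div_of_nonneg_left one_pos.le (by positivity)
      nlinarith [mul_nonneg (mul_nonneg hl0.le (sub_nonneg.2 hl)) hsl.le]
    linarith [i1, i2.le, i2.ge]
  have htail_nonneg : (0:ℝ) ≤ ∫ t in Set.Ioi (1:ℝ), G t := by
    apply setIntegral_nonneg measurableSet_Ioi
    intro t _
    exact (Real.exp_pos _).le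
  have hI : (∫ t in (0:ℝ)..1, 4 * (Real.sqrt (1 - t^2) * Real.exp (-(4*l) * t^2)))
      = 4 * ∫ t in Set.Ioc (0:ℝ) 1, S t := by
    rw [intervalIntegral.integral_of_le zero_le_one, ← integral_const_mul]
  have hval : Real.sqrt π / Real.sqrt l
      = 4 * ((∫ t in Set.Ioc (0:ℝ) 1, G t) + ∫ t in Set.Ioi (1:ℝ), G t) := by
    rw [← hIsplit, hgauss4]
    ring
  rw [hI, hval]
  have hrw : 4 * (∫ t in Set.Ioc (0:ℝ) 1, S t)
      - 4 * ((∫ t in Set.Ioc (0:ℝ) 1, G t) + ∫ t in Set.Ioi (1:ℝ), G t)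
      = -((4 * ((∫ t in Set.Ioc (0:ℝ) 1, G t) - ∫ t in Set.Ioc (0:ℝ) 1, S t))
        + 4 * ∫ t in Set.Ioi (1:ℝ), G t) := by ring
  rw [hrw, abs_neg, abs_of_nonneg (by linarith)]
  have final : 4 * (1/(2*l) * (1/Real.sqrt l)) + 4 * (1/(l * Real.sqrt l)) = 6 / (l * Real.sqrt l) := by
    field_simp
    ring
  linarith [hdiff, htail, final.le, final.ge]



lemma q01_gauss (hl : 0 ≤ l) :
    q l 0 + q l 1
      = π⁻¹ * ∫ t in (0:ℝ)..1, 4 * (Real.sqrt (1 - t^2) * Real.exp (-(4*l) * t^2)) := by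
  rw [q01_integral hl, ← subst_integral l]
  have hcongr : ∫ θ in (0:ℝ)..π, Real.exp (-(2*l) * (1 - Real.cos θ)) * (1 + Real.cos θ)
      = ∫ θ in (0:ℝ)..π, Real.exp (-(2*l)) * (Real.exp (2*l*Real.cos θ) * (1 + Real.cos θ)) := by
    apply intervalIntegral.integral_congr
    intro θ _
    show Real.exp (-(2*l) * (1 - Real.cos θ)) * (1 + Real.cos θ)
      = Real.exp (-(2*l)) * (Real.exp (2*l*Real.cos θ) * (1 + Real.cos θ))
    rw [← mul_assoc, ← Real.exp_add]
    congr 2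
    ring
  rw [hcongr, intervalIntegral.integral_const_mul]
  ring

lemma q01_est (hl : 1 ≤ l) :
    |q l 0 + q l 1 - 1 / Real.sqrt (π * l)| ≤ 6 / (l * Real.sqrt l) := by
  have hl0 : (0:ℝ) ≤ l := by linarith
  have hsπ : 0 < Real.sqrt π := Real.sqrt_pos.2 Real.pi_pos
  have hsl : 0 < Real.sqrt l := Real.sqrt_pos.2 (by linarith)
  have hππ : Real.sqrt π * Real.sqrt π = π := Real.mul_self_sqrt Real.pi_pos.le
  have h1 : 1 / Real.sqrt (π*l) = π⁻¹ * (Real.sqrt π / Real.sqrt l) := by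
    rw [Real.sqrt_mul Real.pi_pos.le]
    have h2 : π⁻¹ * (Real.sqrt π / Real.sqrt l) = Real.sqrt π / (π * Real.sqrt l) := by
      ring
    rw [h2, div_eq_div_iff (by positivity) (by positivity)]
    linear_combination (-Real.sqrt l) * hππ
  rw [q01_gauss hl0, h1, ← mul_sub, abs_mul, abs_of_nonneg (inv_nonneg.2 Real.pi_pos.le)]
  have hπ1 : π⁻¹ ≤ 1 := by
    rw [show (1:ℝ) = 1⁻¹ by norm_num]
    apply inv_anti₀ one_pos
    linarith [Real.two_le_pi]
  calc π⁻¹ * |(∫ t in (0:ℝ)..1, 4 * (Real.sqrt (1 - t^2) * Real.exp (-(4*l) * t^2)))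
        - Real.sqrt π / Real.sqrt l|
      ≤ 1 * |(∫ t in (0:ℝ)..1, 4 * (Real.sqrt (1 - t^2) * Real.exp (-(4*l) * t^2)))
        - Real.sqrt π / Real.sqrt l| := mul_le_mul_of_nonneg_right hπ1 (abs_nonneg _)
    _ = |(∫ t in (0:ℝ)..1, 4 * (Real.sqrt (1 - t^2) * Real.exp (-(4*l) * t^2)))
        - Real.sqrt π / Real.sqrt l| := one_mul _
    _ ≤ 6 / (l * Real.sqrt l) := gauss_est l hl

end PoissonAux

open PoissonAux in
/-- Mean absolute difference of two independent Poisson(m·x) variables (Skellam):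
`E[min(K,L)]/m = x − m^{-1/2}√(x/π) + O(m⁻¹)` uniformly for `x ∈ [a,b]`, the expectation
being written as a sum against the product of Poisson probability weights. -/
theorem poisson_min_mean_expansion (a b : ℝ) (ha : 0 < a) (hab : a ≤ b) :
    ∃ C : ℝ, ∃ M : ℕ, ∀ m : ℕ, M ≤ m → ∀ x ∈ Set.Icc a b,
      |(∑' p : ℕ × ℕ, (min p.1 p.2 : ℝ)
            * (Real.exp (-((m : ℝ) * x)) * ((m : ℝ) * x) ^ p.1 / Nat.factorial p.1)
            * (Real.exp (-((m : ℝ) * x)) * ((m : ℝ) * x) ^ p.2 / Nat.factorial p.2))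
          / (m : ℝ)
        - x + (m : ℝ) ^ (-(1:ℝ)/2) * Real.sqrt (x / Real.pi)|
      ≤ C * ((m : ℝ))⁻¹ := by
  refine ⟨6, Nat.ceil (a⁻¹) + 1, fun m hm x hx => ?_⟩
  obtain ⟨hax, hxb⟩ := hx
  have hx0 : 0 < x := lt_of_lt_of_le ha hax
  have hmpos : 0 < m := by omega
  have hm0 : (0:ℝ) < (m:ℝ) := by exact_mod_cast hmpos
  set l : ℝ := (m:ℝ) * x with hldef
  have hl0 : (0:ℝ) < l := by positivity
  have hl1 : (1:ℝ) ≤ l := by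
    have h2 : (a⁻¹ : ℝ) ≤ (Nat.ceil (a⁻¹) : ℝ) := Nat.le_ceil _
    have h3 : ((Nat.ceil (a⁻¹) : ℕ) : ℝ) ≤ (m:ℝ) := by
      exact_mod_cast Nat.le_of_succ_le hm
    have h1 : (a⁻¹ : ℝ) ≤ (m:ℝ) := by linarith
    calc (1:ℝ) = a⁻¹ * a := by field_simp
      _ ≤ (m:ℝ) * x := mul_le_mul h1 hax ha.le (by linarith)
  have hsl : 0 < Real.sqrt l := Real.sqrt_pos.2 hl0
  have hsl1 : 1 ≤ Real.sqrt l := by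
    rw [show (1:ℝ) = Real.sqrt 1 by simp]
    exact Real.sqrt_le_sqrt hl1
  have hTT : (∑' y : ℕ × ℕ, (min y.1 y.2 : ℝ)
        * (Real.exp (-l) * l ^ y.1 / Nat.factorial y.1)
        * (Real.exp (-l) * l ^ y.2 / Nat.factorial y.2))
      = l - l * (q l 0 + q l 1) := by
    rw [← tsum_min hl0.le]
    refine tsum_congr fun y => ?_
    unfold PoissonAux.p
    rw [Nat.cast_min]
    ring
  have hq := q01_est (l := l) hl1
  have hrpow : ((m:ℝ)) ^ (-(1:ℝ)/2) * Real.sqrt (x / π) = x * (1 / Real.sqrt (π * l)) := by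
    have hmh : ((m:ℝ)) ^ (-(1:ℝ)/2) = (Real.sqrt (m:ℝ))⁻¹ := by
      rw [show (-(1:ℝ)/2) = -(1/2 : ℝ) by norm_num, Real.rpow_neg hm0.le,
        ← Real.sqrt_eq_rpow]
    have h1 : Real.sqrt (π * l) = Real.sqrt π * (Real.sqrt (m:ℝ) * Real.sqrt x) := by
      rw [hldef, Real.sqrt_mul Real.pi_pos.le, Real.sqrt_mul (le_of_lt hm0)]
    have h2 : Real.sqrt (x / π) = Real.sqrt x / Real.sqrt π := Real.sqrt_div hx0.le π
    rw [hmh, h1, h2]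
    have hsx : 0 < Real.sqrt x := Real.sqrt_pos.2 hx0
    have hsm : 0 < Real.sqrt (m:ℝ) := Real.sqrt_pos.2 hm0
    have hsπ : 0 < Real.sqrt π := Real.sqrt_pos.2 Real.pi_pos
    have hxx : Real.sqrt x * Real.sqrt x = x := Real.mul_self_sqrt hx0.le
    have e1 : (Real.sqrt (m:ℝ))⁻¹ * (Real.sqrt x / Real.sqrt π)
        = Real.sqrt x / (Real.sqrt π * Real.sqrt (m:ℝ)) := by
      ring
    have e2 : x * (1 / (Real.sqrt π * (Real.sqrt (m:ℝ) * Real.sqrt x)))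
        = x / (Real.sqrt π * (Real.sqrt (m:ℝ) * Real.sqrt x)) := by ring
    rw [e1, e2, div_eq_div_iff (by positivity) (by positivity)]
    linear_combination (Real.sqrt π * Real.sqrt (m:ℝ)) * hxx
  have hexpr : (l - l * (q l 0 + q l 1)) / (m:ℝ) - x + x * (1 / Real.sqrt (π * l))
      = x * ((1 / Real.sqrt (π * l)) - (q l 0 + q l 1)) := by
    have hdiv : (l - l * (q l 0 + q l 1)) / (m:ℝ) = x - x * (q l 0 + q l 1) := by
      rw [hldef]
      field_simp
    rw [hdiv]
    ring
  rw [hTT, hrpow, hexpr, abs_mul, abs_of_pos hx0]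
  calc x * |1 / Real.sqrt (π * l) - (q l 0 + q l 1)|
      ≤ x * (6 / (l * Real.sqrt l)) := by
        apply mul_le_mul_of_nonneg_left ?_ hx0.le
        rw [abs_sub_comm]
        exact hq
    _ = 6 / ((m:ℝ) * Real.sqrt l) := by
        rw [hldef]
        field_simp
    _ ≤ 6 * ((m:ℝ))⁻¹ := by
        have hms : (m:ℝ) ≤ (m:ℝ) * Real.sqrt l := by nlinarith
        calc 6 / ((m:ℝ) * Real.sqrt l) ≤ 6 / (m:ℝ) :=
            div_le_div_of_nonneg_left (by norm_num) hm0 hms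
          _ = 6 * ((m:ℝ))⁻¹ := by ring
end

section
/- Let F : [0,∞)^d → ℝ be bounded and continuous. Then for every L > 0, the Szász–Mirakyan smoothing converges uniformly on [0,L]^d: sup_{x ∈ [0,L]^d} |F_m(x) − F(x)| → 0 as m_min → ∞; precisely, for every ε > 0 there exists M such that for all m = (m_1,…,m_d) with m_min ≥ M, sup_{x ∈ [0,L]^d} |F_m(x) − F(x)| ≤ ε. -/
open Real

namespace SzaszAux

lemma tsum_expSeries (r : ℝ) : ∑' n : ℕ, r ^ n / n.factorial = Real.exp r := by
  rw [Real.exp_eq_exp_ℝ, NormedSpace.exp_eq_tsum_div]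

lemma shift1 (r : ℝ) : (fun n : ℕ => ((n + 1 : ℕ) : ℝ) * r ^ (n + 1) / (n + 1).factorial)
      = fun n : ℕ => r * (r ^ n / n.factorial) := by
  funext n
  rw [Nat.factorial_succ]
  push_cast
  have h1 : ((n.factorial : ℝ)) ≠ 0 := Nat.cast_ne_zero.mpr n.factorial_ne_zero
  have h2 : ((n : ℝ) + 1) ≠ 0 := by positivity
  field_simp
  ring

lemma summable_moment1 (r : ℝ) : Summable (fun n : ℕ => (n : ℝ) * r ^ n / n.factorial) := by
  rw [← summable_nat_add_iff 1]
  have := shift1 r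
  simp only [Nat.cast_add, Nat.cast_one] at this
  rw [show (fun n : ℕ => ((n + 1 : ℕ) : ℝ) * r ^ (n + 1) / (n + 1).factorial)
      = fun n : ℕ => r * (r ^ n / n.factorial) from shift1 r]
  exact (Real.summable_pow_div_factorial r).mul_left r

lemma tsum_moment1 (r : ℝ) : ∑' n : ℕ, (n : ℝ) * r ^ n / n.factorial = r * Real.exp r := by
  rw [Summable.tsum_eq_zero_add (summable_moment1 r)]
  rw [show (fun n : ℕ => ((n + 1 : ℕ) : ℝ) * r ^ (n + 1) / (n + 1).factorial)
      = fun n : ℕ => r * (r ^ n / n.factorial) from shift1 r]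
  rw [tsum_mul_left, tsum_expSeries]
  simp

lemma shift2 (r : ℝ) :
    (fun n : ℕ => ((n + 2 : ℕ) : ℝ) * (((n + 2 : ℕ) : ℝ) - 1) * r ^ (n + 2) / (n + 2).factorial)
      = fun n : ℕ => (r ^ 2) * (r ^ n / n.factorial) := by
  funext n
  rw [show n + 2 = (n + 1) + 1 from rfl, Nat.factorial_succ, Nat.factorial_succ]
  push_cast
  have h1 : ((n.factorial : ℝ)) ≠ 0 := Nat.cast_ne_zero.mpr n.factorial_ne_zero
  have h2 : ((n : ℝ) + 1) ≠ 0 := by positivity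
  have h3 : ((n : ℝ) + 1 + 1) ≠ 0 := by positivity
  field_simp
  ring

lemma summable_moment2 (r : ℝ) :
    Summable (fun n : ℕ => (n : ℝ) * ((n : ℝ) - 1) * r ^ n / n.factorial) := by
  rw [← summable_nat_add_iff 2]
  rw [show (fun n : ℕ => ((n + 2 : ℕ) : ℝ) * (((n + 2 : ℕ) : ℝ) - 1) * r ^ (n + 2) / (n + 2).factorial)
      = fun n : ℕ => (r ^ 2) * (r ^ n / n.factorial) from shift2 r]
  exact (Real.summable_pow_div_factorial r).mul_left _

lemma tsum_moment2 (r : ℝ) :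
    ∑' n : ℕ, (n : ℝ) * ((n : ℝ) - 1) * r ^ n / n.factorial = r ^ 2 * Real.exp r := by
  have h := summable_moment2 r
  have key : (fun n : ℕ => ((n : ℝ) + 2) * (((n : ℝ) + 2) - 1) * r ^ (n + 2) / (n + 2).factorial)
      = fun n : ℕ => (r ^ 2) * (r ^ n / n.factorial) := by
    have := shift2 r
    simpa using this
  calc ∑' n : ℕ, (n : ℝ) * ((n : ℝ) - 1) * r ^ n / n.factorial
      = ∑' n : ℕ, ((n + 2 : ℕ) : ℝ) * (((n + 2 : ℕ) : ℝ) - 1) * r ^ (n + 2) / (n + 2).factorial := by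
        rw [Summable.tsum_eq_zero_add h, Summable.tsum_eq_zero_add ((summable_nat_add_iff 1).mpr h)]
        simp only [Nat.cast_zero, Nat.cast_one, Nat.cast_add, zero_mul, zero_div, zero_add,
          sub_self, mul_zero, one_mul, zero_sub]
        norm_num
        exact tsum_congr fun n => by
          simp only [show n + 1 + 1 = n + 2 from rfl]
          push_cast
          ring
    _ = r ^ 2 * Real.exp r := by
        rw [shift2 r, tsum_mul_left, tsum_expSeries]


open scoped ENNReal

lemma tsum_pi_prod_ennreal : ∀ {d : ℕ} (f : Fin d → ℕ → ℝ≥0∞),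
    ∑' k : Fin d → ℕ, ∏ i, f i (k i) = ∏ i, ∑' n, f i n := by
  intro d
  induction d with
  | zero =>
    intro f
    rw [tsum_eq_single (fun i => i.elim0)]
    · simp
    · intro b hb
      exact absurd (Subsingleton.elim b _) hb
  | succ d ih =>
    intro f
    rw [← (Fin.consEquiv (fun _ : Fin (d + 1) => ℕ)).tsum_eq]
    have h1 : ∀ p : ℕ × (Fin d → ℕ),
        (∏ i, f i ((Fin.consEquiv (fun _ : Fin (d + 1) => ℕ)) p i))
          = f 0 p.1 * ∏ i : Fin d, f i.succ (p.2 i) := by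
      intro p
      have hp : (Fin.consEquiv (fun _ : Fin (d + 1) => ℕ)) p = Fin.cons p.1 p.2 := rfl
      rw [Fin.prod_univ_succ, hp]
      simp
    simp only [h1]
    rw [ENNReal.tsum_prod' ]
    simp only [ENNReal.tsum_mul_left]
    rw [ENNReal.tsum_mul_right, ih (fun i => f i.succ), Fin.prod_univ_succ]

lemma summable_tsum_pi_prod {d : ℕ} (f : Fin d → ℕ → ℝ)
    (h0 : ∀ i n, 0 ≤ f i n) (hs : ∀ i, Summable (f i)) :
    Summable (fun k : Fin d → ℕ => ∏ i, f i (k i)) ∧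
      ∑' k : Fin d → ℕ, ∏ i, f i (k i) = ∏ i, ∑' n, f i n := by
  have hofp : ∀ k : Fin d → ℕ,
      ENNReal.ofReal (∏ i, f i (k i)) = ∏ i, ENNReal.ofReal (f i (k i)) :=
    fun k => ENNReal.ofReal_prod_of_nonneg (fun i _ => h0 i (k i))
  have hE : ∑' k : Fin d → ℕ, ENNReal.ofReal (∏ i, f i (k i))
      = ∏ i, ENNReal.ofReal (∑' n, f i n) := by
    calc ∑' k : Fin d → ℕ, ENNReal.ofReal (∏ i, f i (k i))
        = ∑' k : Fin d → ℕ, ∏ i, ENNReal.ofReal (f i (k i)) := by simp only [hofp]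
      _ = ∏ i, ∑' n, ENNReal.ofReal (f i n) := tsum_pi_prod_ennreal (fun i n => ENNReal.ofReal (f i n))
      _ = ∏ i, ENNReal.ofReal (∑' n, f i n) := by
          refine Finset.prod_congr rfl fun i _ => ?_
          rw [ENNReal.ofReal_tsum_of_nonneg (h0 i) (hs i)]
  have hne : ∑' k : Fin d → ℕ, ENNReal.ofReal (∏ i, f i (k i)) ≠ ⊤ := by
    rw [hE]
    exact ENNReal.prod_ne_top fun i _ => ENNReal.ofReal_ne_top
  have hsum : Summable (fun k : Fin d → ℕ => ∏ i, f i (k i)) := by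
    have := ENNReal.summable_toReal hne
    refine this.congr fun k => ?_
    rw [ENNReal.toReal_ofReal (Finset.prod_nonneg fun i _ => h0 i (k i))]
  refine ⟨hsum, ?_⟩
  have key := ENNReal.ofReal_tsum_of_nonneg
    (fun k : Fin d → ℕ => Finset.prod_nonneg fun i _ => h0 i (k i)) hsum
  rw [hE] at key
  have hR : ENNReal.ofReal (∏ i, ∑' n, f i n) = ∏ i, ENNReal.ofReal (∑' n, f i n) :=
    ENNReal.ofReal_prod_of_nonneg fun i _ => tsum_nonneg (fun n => h0 i n)
  exact (ENNReal.ofReal_eq_ofReal_iff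
    (tsum_nonneg fun k => Finset.prod_nonneg fun i _ => h0 i (k i))
    (Finset.prod_nonneg fun i _ => tsum_nonneg fun n => h0 i n)).mp (key.trans hR.symm)

/- single-coordinate Poisson weight -/
noncomputable def q (r : ℝ) (n : ℕ) : ℝ := Real.exp (-r) * r ^ n / n.factorial

lemma q_nonneg {r : ℝ} (hr : 0 ≤ r) (n : ℕ) : 0 ≤ q r n := by
  unfold q; positivity

lemma q_eq (r : ℝ) (n : ℕ) : q r n = Real.exp (-r) * (r ^ n / n.factorial) := by
  unfold q; ring

lemma summable_q (r : ℝ) : Summable (q r) := by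
  refine ((Real.summable_pow_div_factorial r).mul_left (Real.exp (-r))).congr fun n => ?_
  rw [q_eq]

lemma tsum_q (r : ℝ) : ∑' n, q r n = 1 := by
  simp only [q_eq]
  rw [tsum_mul_left, tsum_expSeries, ← Real.exp_add]
  simp

lemma sq_decomp (r : ℝ) (n : ℕ) : ((n : ℝ) - r) ^ 2 * (r ^ n / n.factorial)
    = (n : ℝ) * ((n : ℝ) - 1) * r ^ n / n.factorial
      + ((1 - 2 * r) * ((n : ℝ) * r ^ n / n.factorial) + r ^ 2 * (r ^ n / n.factorial)) := by
  ring

lemma summable_sq_series (r : ℝ) :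
    Summable (fun n : ℕ => ((n : ℝ) - r) ^ 2 * (r ^ n / n.factorial)) := by
  simp only [sq_decomp]
  exact (summable_moment2 r).add
    (((summable_moment1 r).mul_left _).add ((Real.summable_pow_div_factorial r).mul_left _))

lemma tsum_sq_series (r : ℝ) :
    ∑' n : ℕ, ((n : ℝ) - r) ^ 2 * (r ^ n / n.factorial) = r * Real.exp r := by
  simp only [sq_decomp]
  rw [Summable.tsum_add (summable_moment2 r) (((summable_moment1 r).mul_left _).add
      ((Real.summable_pow_div_factorial r).mul_left _)),
    Summable.tsum_add ((summable_moment1 r).mul_left _) ((Real.summable_pow_div_factorial r).mul_left _),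
    tsum_moment2, tsum_mul_left, tsum_mul_left, tsum_moment1, tsum_expSeries]
  ring

lemma summable_sq_q (r : ℝ) :
    Summable (fun n : ℕ => ((n : ℝ) - r) ^ 2 * q r n) := by
  have : (fun n : ℕ => ((n : ℝ) - r) ^ 2 * q r n)
      = fun n : ℕ => Real.exp (-r) * (((n : ℝ) - r) ^ 2 * (r ^ n / n.factorial)) := by
    funext n; rw [q_eq]; ring
  rw [this]
  exact (summable_sq_series r).mul_left _

lemma tsum_sq_q (r : ℝ) : ∑' n : ℕ, ((n : ℝ) - r) ^ 2 * q r n = r := by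
  have : (fun n : ℕ => ((n : ℝ) - r) ^ 2 * q r n)
      = fun n : ℕ => Real.exp (-r) * (((n : ℝ) - r) ^ 2 * (r ^ n / n.factorial)) := by
    funext n; rw [q_eq]; ring
  rw [this, tsum_mul_left, tsum_sq_series, ← mul_assoc, mul_comm (Real.exp (-r)) r, mul_assoc,
    ← Real.exp_add]
  simp

lemma summable_sq_q' (c : ℝ) (x : ℝ) (hc : 0 < c) :
    Summable (fun n : ℕ => ((n : ℝ) / c - x) ^ 2 * q (c * x) n) := by
  have : (fun n : ℕ => ((n : ℝ) / c - x) ^ 2 * q (c * x) n)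
      = fun n : ℕ => (1 / c ^ 2) * (((n : ℝ) - c * x) ^ 2 * q (c * x) n) := by
    funext n
    have hc' : c ≠ 0 := ne_of_gt hc
    have hd : ((n : ℝ) / c - x) = ((n : ℝ) - c * x) / c := by field_simp
    rw [hd, div_pow]
    ring
  rw [this]
  exact (summable_sq_q (c * x)).mul_left _

lemma tsum_sq_q' (c : ℝ) (x : ℝ) (hc : 0 < c) :
    ∑' n : ℕ, ((n : ℝ) / c - x) ^ 2 * q (c * x) n = x / c := by
  have : (fun n : ℕ => ((n : ℝ) / c - x) ^ 2 * q (c * x) n)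
      = fun n : ℕ => (1 / c ^ 2) * (((n : ℝ) - c * x) ^ 2 * q (c * x) n) := by
    funext n
    have hc' : c ≠ 0 := ne_of_gt hc
    have hd : ((n : ℝ) / c - x) = ((n : ℝ) - c * x) / c := by field_simp
    rw [hd, div_pow]
    ring
  rw [this, tsum_mul_left, tsum_sq_q]
  have hc' : c ≠ 0 := ne_of_gt hc
  first
  | (field_simp; ring)
  | field_simp

end SzaszAux


open MeasureTheory ProbabilityTheory Filter Real

/-- Uniform convergence of the multivariate Szász–Mirakyan operator on `[0,L]^d`
for bounded continuous functions on `[0,∞)^d`. -/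
theorem szasz_operator_uniform_convergence
    {d : ℕ} (hd : 0 < d) (F : (Fin d → ℝ) → ℝ)
    (hbdd : ∃ Cb : ℝ, ∀ x : Fin d → ℝ, (∀ j, 0 ≤ x j) → |F x| ≤ Cb)
    (hcont : ContinuousOn F {x : Fin d → ℝ | ∀ j, 0 ≤ x j}) :
    ∀ L > (0 : ℝ), ∀ ε > 0, ∃ M : ℕ, ∀ m : Fin d → ℕ, (∀ j, 0 < m j) → M ≤ mmin m →
      ∀ x : Fin d → ℝ, (∀ j, x j ∈ Set.Icc (0:ℝ) L) →
        |szasz F m x - F x| ≤ ε := by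
  classical
  obtain ⟨Cb, hCb⟩ := hbdd
  have hCb0 : 0 ≤ Cb := le_trans (abs_nonneg _) (hCb (fun _ => 0) (fun _ => le_refl 0))
  intro L hL ε hε
  -- the compact box [0, L+1]^d and uniform continuity of F on it
  set box : Set (Fin d → ℝ) := Set.pi Set.univ (fun _ => Set.Icc (0:ℝ) (L+1)) with hboxdef
  have hboxc : IsCompact box := isCompact_univ_pi fun _ => isCompact_Icc
  have hsubs : box ⊆ {x : Fin d → ℝ | ∀ j, 0 ≤ x j} := by
    intro y hy j
    exact (hy j (Set.mem_univ j)).1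
  have huc := hboxc.uniformContinuousOn_of_continuous (hcont.mono hsubs)
  obtain ⟨δ, hδpos, hδ⟩ := Metric.uniformContinuousOn_iff.mp huc (ε/2) (half_pos hε)
  set δ' : ℝ := min (δ/2) 1 with hδ'def
  have hδ'0 : 0 < δ' := lt_min (half_pos hδpos) one_pos
  have hδ'1 : δ' ≤ 1 := min_le_right _ _
  have hδ'δ : δ' < δ := lt_of_le_of_lt (min_le_left _ _) (half_lt_self hδpos)
  set C2 : ℝ := 2 * Cb / δ' ^ 2 with hC2def
  have hC20 : 0 ≤ C2 := by positivity
  set A : ℝ := C2 * (d * L) * (2 / ε) with hAdef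
  set Mn : ℕ := ⌈A⌉₊ + 1 with hMndef
  refine ⟨Mn, ?_⟩
  intro m hm hM x hx
  have hMn0 : (0:ℝ) < (Mn : ℝ) := by
    have : 0 < Mn := Nat.succ_pos _
    exact_mod_cast this
  have hAM : A ≤ (Mn : ℝ) := by
    refine le_trans (Nat.le_ceil A) ?_
    exact_mod_cast Nat.le_succ _
  have hmj : ∀ j, (Mn : ℝ) ≤ (m j : ℝ) := by
    intro j
    have h1 : mmin m ≤ m j := ciInf_le (OrderBot.bddBelow _) j
    exact_mod_cast le_trans hM h1
  have hmj0 : ∀ j, (0:ℝ) < (m j : ℝ) := fun j => by exact_mod_cast hm j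
  have hx0 : ∀ j, 0 ≤ x j := fun j => (hx j).1
  -- per-coordinate Poisson weights
  set qq : Fin d → ℕ → ℝ := fun j n => SzaszAux.q ((m j : ℝ) * x j) n with hqqdef
  have hr0 : ∀ j, 0 ≤ (m j : ℝ) * x j := fun j => mul_nonneg (le_of_lt (hmj0 j)) (hx0 j)
  have hq0 : ∀ j n, 0 ≤ qq j n := fun j n => SzaszAux.q_nonneg (hr0 j) n
  have hqs : ∀ j, Summable (qq j) := fun j => SzaszAux.summable_q _
  have hPdef : ∀ k : Fin d → ℕ, poissonWeight m k x = ∏ j, qq j (k j) := fun k => rfl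
  obtain ⟨hPsum0, hPtsum0⟩ := SzaszAux.summable_tsum_pi_prod qq hq0 hqs
  have hPsum : Summable (fun k : Fin d → ℕ => poissonWeight m k x) := by
    refine hPsum0.congr fun k => (hPdef k).symm
  have hPts : ∑' k : Fin d → ℕ, poissonWeight m k x = 1 := by
    calc ∑' k : Fin d → ℕ, poissonWeight m k x
        = ∑' k : Fin d → ℕ, ∏ j, qq j (k j) := tsum_congr fun k => hPdef k
      _ = ∏ j, ∑' n, qq j n := hPtsum0
      _ = 1 := by
          rw [Finset.prod_eq_one]
          intro j _
          exact SzaszAux.tsum_q _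
  have hP0 : ∀ k : Fin d → ℕ, 0 ≤ poissonWeight m k x := fun k => by
    rw [hPdef k]; exact Finset.prod_nonneg fun i _ => hq0 i (k i)
  -- second moment bound per coordinate
  have hsq : ∀ j : Fin d,
      Summable (fun k : Fin d → ℕ => ((k j : ℝ) / (m j) - x j) ^ 2 * poissonWeight m k x)
      ∧ ∑' k : Fin d → ℕ, ((k j : ℝ) / (m j) - x j) ^ 2 * poissonWeight m k x
          = x j / (m j) := by
    intro j
    set f : Fin d → ℕ → ℝ :=
      fun i n => (if i = j then ((n : ℝ) / (m j) - x j) ^ 2 else 1) * qq i n with hfdef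
    have hf0 : ∀ i n, 0 ≤ f i n := by
      intro i n
      refine mul_nonneg ?_ (hq0 i n)
      by_cases h : i = j
      · simp only [h, if_pos rfl]; positivity
      · simp only [if_neg h]; exact zero_le_one
    have hfs : ∀ i, Summable (f i) := by
      intro i
      by_cases h : i = j
      · subst h
        have : f i = fun n : ℕ => ((n : ℝ) / (m i) - x i) ^ 2 * qq i n := by
          funext n; simp [hfdef]
        rw [this]
        exact SzaszAux.summable_sq_q' _ _ (hmj0 i)
      · have : f i = qq i := by
          funext n; simp only [hfdef, if_neg h, one_mul]
        rw [this]
        exact hqs i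
    obtain ⟨hS, hT⟩ := SzaszAux.summable_tsum_pi_prod f hf0 hfs
    have hprod : ∀ k : Fin d → ℕ,
        (∏ i, f i (k i)) = ((k j : ℝ) / (m j) - x j) ^ 2 * poissonWeight m k x := by
      intro k
      rw [hPdef k]
      simp only [hfdef]
      rw [Finset.prod_mul_distrib]
      congr 1
      rw [Finset.prod_ite_eq' Finset.univ j (fun i => ((k i : ℝ) / (m j) - x j) ^ 2)]
      simp
    constructor
    · exact hS.congr fun k => hprod k
    · calc ∑' k : Fin d → ℕ, ((k j : ℝ) / (m j) - x j) ^ 2 * poissonWeight m k x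
          = ∑' k : Fin d → ℕ, ∏ i, f i (k i) := tsum_congr fun k => (hprod k).symm
        _ = ∏ i, ∑' n, f i n := hT
        _ = x j / (m j) := by
            rw [Finset.prod_eq_single j
              (fun i _ hij => by
                have : f i = qq i := by
                  funext n; simp only [hfdef, if_neg hij, one_mul]
                rw [this]
                exact SzaszAux.tsum_q _)
              (fun h => absurd (Finset.mem_univ j) h)]
            have : f j = fun n : ℕ => ((n : ℝ) / (m j) - x j) ^ 2 * qq j n := by
              funext n; simp [hfdef]
            rw [this]
            exact SzaszAux.tsum_sq_q' _ _ (hmj0 j)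
  -- the main splitting
  set u : (Fin d → ℕ) → (Fin d → ℝ) := fun k j => (k j : ℝ) / (m j) with hudef
  have hu0 : ∀ k j, 0 ≤ u k j := fun k j => by
    simp only [hudef]
    exact div_nonneg (Nat.cast_nonneg _) (Nat.cast_nonneg _)
  have hFu : ∀ k, |F (u k)| ≤ Cb := fun k => hCb (u k) (hu0 k)
  have hFxb : |F x| ≤ Cb := hCb x hx0
  have hGsum : Summable (fun k : Fin d → ℕ => F (u k) * poissonWeight m k x) := by
    refine Summable.of_norm_bounded (hPsum.mul_left Cb) ?_
    intro k
    rw [Real.norm_eq_abs, abs_mul, abs_of_nonneg (hP0 k)]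
    exact mul_le_mul_of_nonneg_right (hFu k) (hP0 k)
  have hsplit : szasz F m x - F x
      = ∑' k : Fin d → ℕ, (F (u k) - F x) * poissonWeight m k x := by
    have h1 : szasz F m x = ∑' k : Fin d → ℕ, F (u k) * poissonWeight m k x := rfl
    have h2 : ∑' k : Fin d → ℕ, F x * poissonWeight m k x = F x := by
      rw [tsum_mul_left, hPts, mul_one]
    rw [h1]
    calc ∑' k : Fin d → ℕ, F (u k) * poissonWeight m k x - F x
        = ∑' k : Fin d → ℕ, F (u k) * poissonWeight m k x
          - ∑' k : Fin d → ℕ, F x * poissonWeight m k x := by rw [h2]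
      _ = ∑' k : Fin d → ℕ, (F (u k) * poissonWeight m k x - F x * poissonWeight m k x) :=
          (Summable.tsum_sub hGsum (hPsum.mul_left (F x))).symm
      _ = ∑' k : Fin d → ℕ, (F (u k) - F x) * poissonWeight m k x :=
          tsum_congr fun k => (sub_mul _ _ _).symm
  -- the pointwise bound
  set B : (Fin d → ℕ) → ℝ :=
    fun k => (ε/2) * poissonWeight m k x
      + C2 * ∑ j, ((k j : ℝ) / (m j) - x j) ^ 2 * poissonWeight m k x with hBdef
  have hBsum : Summable B := by
    refine Summable.add (hPsum.mul_left _) (Summable.mul_left _ ?_)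
    exact summable_sum fun j _ => (hsq j).1
  have hpt : ∀ k : Fin d → ℕ,
      |(F (u k) - F x) * poissonWeight m k x| ≤ B k := by
    intro k
    rw [abs_mul, abs_of_nonneg (hP0 k)]
    have hsum0 : 0 ≤ ∑ j, ((k j : ℝ) / (m j) - x j) ^ 2 * poissonWeight m k x :=
      Finset.sum_nonneg fun j _ => mul_nonneg (sq_nonneg _) (hP0 k)
    by_cases hnear : ∀ j, |u k j - x j| ≤ δ'
    · -- near case
      have hbox_u : u k ∈ box := by
        rw [hboxdef]
        refine Set.mem_univ_pi.mpr fun j => ?_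
        refine ⟨hu0 k j, ?_⟩
        have h1 := hnear j
        have h2 : u k j - x j ≤ δ' := le_trans (le_abs_self _) h1
        have h3 := (hx j).2
        linarith
      have hbox_x : x ∈ box := by
        rw [hboxdef]
        refine Set.mem_univ_pi.mpr fun j => ?_
        exact ⟨(hx j).1, le_trans (hx j).2 (by linarith)⟩
      have hdist : dist (u k) x < δ := by
        refine lt_of_le_of_lt ((dist_pi_le_iff (le_of_lt hδ'0)).mpr fun j => ?_) hδ'δ
        rw [Real.dist_eq]
        exact hnear j
      have hFd := hδ (u k) hbox_u x hbox_x hdist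
      rw [Real.dist_eq] at hFd
      calc |F (u k) - F x| * poissonWeight m k x
          ≤ (ε/2) * poissonWeight m k x :=
            mul_le_mul_of_nonneg_right (le_of_lt hFd) (hP0 k)
        _ ≤ B k := le_add_of_nonneg_right (mul_nonneg hC20 hsum0)
    · -- far case
      push_neg at hnear
      obtain ⟨j0, hj0⟩ := hnear
      have h2Cb : |F (u k) - F x| ≤ 2 * Cb := by
        calc |F (u k) - F x| ≤ |F (u k)| + |F x| := abs_sub _ _
          _ ≤ Cb + Cb := add_le_add (hFu k) hFxb
          _ = 2 * Cb := by ring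
      have hterm : δ' ^ 2 * poissonWeight m k x
          ≤ ∑ j, ((k j : ℝ) / (m j) - x j) ^ 2 * poissonWeight m k x := by
        have hj0' : δ' ^ 2 * poissonWeight m k x
            ≤ ((k j0 : ℝ) / (m j0) - x j0) ^ 2 * poissonWeight m k x := by
          refine mul_le_mul_of_nonneg_right ?_ (hP0 k)
          have h1 : δ' ≤ |u k j0 - x j0| := le_of_lt hj0
          calc δ' ^ 2 ≤ |u k j0 - x j0| ^ 2 := pow_le_pow_left₀ (le_of_lt hδ'0) h1 2
            _ = (u k j0 - x j0) ^ 2 := sq_abs _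
            _ = ((k j0 : ℝ) / (m j0) - x j0) ^ 2 := by rw [hudef]
        exact le_trans hj0' (Finset.single_le_sum
          (f := fun j => ((k j : ℝ) / (m j) - x j) ^ 2 * poissonWeight m k x)
          (fun j _ => mul_nonneg (sq_nonneg _) (hP0 k)) (Finset.mem_univ j0))
      have hδ'ne : δ' ≠ 0 := ne_of_gt hδ'0
      calc |F (u k) - F x| * poissonWeight m k x
          ≤ (2 * Cb) * poissonWeight m k x := mul_le_mul_of_nonneg_right h2Cb (hP0 k)
        _ = C2 * (δ' ^ 2 * poissonWeight m k x) := by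
            rw [hC2def]; field_simp
        _ ≤ C2 * ∑ j, ((k j : ℝ) / (m j) - x j) ^ 2 * poissonWeight m k x :=
            mul_le_mul_of_nonneg_left hterm hC20
        _ ≤ B k := le_add_of_nonneg_left (mul_nonneg (by positivity) (hP0 k))
  have habs_sum : Summable (fun k : Fin d → ℕ => |(F (u k) - F x) * poissonWeight m k x|) :=
    Summable.of_nonneg_of_le (fun k => abs_nonneg _) hpt hBsum
  have hBtsum : ∑' k, B k ≤ ε/2 + C2 * (d * (L / Mn)) := by
    have hrw : ∑' k, B k = ε/2 + C2 * ∑ j : Fin d, x j / (m j : ℝ) := by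
      rw [hBdef]
      rw [Summable.tsum_add (hPsum.mul_left _) ((summable_sum fun j _ => (hsq j).1).mul_left _),
        tsum_mul_left, tsum_mul_left, hPts, mul_one,
        Summable.tsum_finsetSum (fun j _ => (hsq j).1)]
      congr 1
      congr 1
      exact Finset.sum_congr rfl fun j _ => (hsq j).2
    rw [hrw]
    have hsumle : ∑ j : Fin d, x j / (m j : ℝ) ≤ d * (L / Mn) := by
      calc ∑ j : Fin d, x j / (m j : ℝ) ≤ ∑ _j : Fin d, L / (Mn : ℝ) := by
            refine Finset.sum_le_sum fun j _ => ?_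
            exact div_le_div₀ (le_of_lt hL) (hx j).2 hMn0 (hmj j)
        _ = d * (L / Mn) := by
            rw [Finset.sum_const, Finset.card_univ, Fintype.card_fin, nsmul_eq_mul]
    exact add_le_add_right (mul_le_mul_of_nonneg_left hsumle hC20) _
  have hfinal : ε/2 + C2 * (d * (L / Mn)) ≤ ε := by
    have hMne : (Mn : ℝ) ≠ 0 := ne_of_gt hMn0
    have h1 : C2 * ((d : ℝ) * (L / (Mn : ℝ))) = (C2 * (d * L)) / Mn := by
      field_simp
    have h2 : C2 * ((d : ℝ) * L) = A * (ε/2) := by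
      rw [hAdef]
      field_simp
    have h3 : (C2 * ((d : ℝ) * L)) / Mn ≤ ε/2 := by
      rw [div_le_iff₀ hMn0, h2]
      calc A * (ε/2) ≤ (Mn : ℝ) * (ε/2) :=
            mul_le_mul_of_nonneg_right hAM (le_of_lt (half_pos hε))
        _ = ε/2 * Mn := mul_comm _ _
    rw [h1]
    linarith
  have hmain : |szasz F m x - F x| ≤ ∑' k, B k := by
    rw [hsplit]
    calc |∑' k : Fin d → ℕ, (F (u k) - F x) * poissonWeight m k x|
        ≤ ∑' k : Fin d → ℕ, |(F (u k) - F x) * poissonWeight m k x| := by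
          have hn : Summable (fun k : Fin d → ℕ =>
              ‖(F (u k) - F x) * poissonWeight m k x‖) := by
            simpa only [Real.norm_eq_abs] using habs_sum
          have h := norm_tsum_le_tsum_norm hn
          simpa only [Real.norm_eq_abs] using h
      _ ≤ ∑' k, B k := Summable.tsum_le_tsum hpt habs_sum hBsum
  linarith
end

section
/- Fix L > 0 and δ > 0. Let φ : [0,∞) → ℝ be a function with |φ(t)| ≤ 1 for all t ≥ 0 that is twice continuously differentiable on [0,δ]. For λ ∈ [0,L] and a positive integer m, let K_λ be a Poisson random variable with mean λ. Then, uniformly in λ ∈ [0,L] as m → ∞, E[φ(K_λ/m)] − φ(λ/m) = (λ/(2m²))·φ''(0) + o(m^{-2}); precisely, for every ε > 0 there exists M such that m ≥ M implies sup_{λ∈[0,L]} |E[φ(K_λ/m)] − φ(λ/m) − (λ/(2m²))·φ''(0)| ≤ ε·m^{-2}. -/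
open Filter Real

lemma aux_bound (j : ℕ) : ∃ C : ℝ, 0 ≤ C ∧ ∀ k : ℕ, (k:ℝ)^j * (1/2:ℝ)^k ≤ C := by
  have hs : Summable (fun k : ℕ => (k:ℝ)^j * (1/2:ℝ)^k) := by
    simpa using summable_pow_mul_geometric_of_norm_lt_one (r := (1/2:ℝ)) j (by norm_num)
  refine ⟨∑' k : ℕ, (k:ℝ)^j * (1/2:ℝ)^k, ?_, fun k => Summable.le_tsum hs k fun i _ => by positivity⟩
  exact tsum_nonneg fun k => by positivity

lemma summable_pow_fac (j : ℕ) {x : ℝ} (hx : 0 ≤ x) :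
    Summable (fun k : ℕ => (k:ℝ)^j * x^k / k.factorial) := by
  obtain ⟨C, hC0, hC⟩ := aux_bound j
  refine Summable.of_nonneg_of_le (fun k => by positivity)
    (fun k => ?_) ((Real.summable_pow_div_factorial (2*x)).mul_left C)
  have h1 : (k:ℝ)^j * x^k / k.factorial = ((k:ℝ)^j * (1/2)^k) * ((2*x)^k / k.factorial) := by
    rw [mul_pow]; field_simp; rw [mul_assoc _ ((1/2:ℝ)^k), ← mul_pow]; norm_num
  rw [h1]
  exact mul_le_mul_of_nonneg_right (hC k) (by positivity)

lemma tsum_exp (x : ℝ) : (∑' k : ℕ, x^k / k.factorial) = Real.exp x := by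
  rw [Real.exp_eq_exp_ℝ, NormedSpace.exp_eq_tsum_div]

lemma fac_ne (k : ℕ) : ((k.factorial : ℝ)) ≠ 0 := by
  exact_mod_cast k.factorial_pos.ne'

lemma tsum_m1 {x : ℝ} (hx : 0 ≤ x) :
    (∑' k : ℕ, (k:ℝ) * x^k / k.factorial) = x * Real.exp x := by
  have hs : Summable (fun k : ℕ => (k:ℝ) * x^k / k.factorial) := by
    simpa using summable_pow_fac 1 hx
  rw [Summable.tsum_eq_zero_add hs]
  have h : ∀ k : ℕ, ((k+1 : ℕ):ℝ) * x^(k+1) / (k+1).factorial = x * (x^k / k.factorial) := by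
    intro k
    rw [Nat.factorial_succ]
    have h1 := fac_ne k
    push_cast
    field_simp
    ring
  simp only [h]
  rw [tsum_mul_left, tsum_exp]
  simp

lemma hnn_aux (k : ℕ) : (0:ℝ) ≤ (k:ℝ) * ((k:ℝ) - 1) := by
  rcases Nat.eq_zero_or_pos k with h | h
  · simp [h]
  · have : (1:ℝ) ≤ (k:ℝ) := by exact_mod_cast h
    nlinarith

lemma summable_m2' {x : ℝ} (hx : 0 ≤ x) :
    Summable (fun k : ℕ => (k:ℝ) * ((k:ℝ) - 1) * x^k / k.factorial) := by
  refine Summable.of_nonneg_of_le (fun k => by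
      have := hnn_aux k; positivity) (fun k => ?_) (summable_pow_fac 2 hx)
  apply div_le_div_of_nonneg_right ?_ (by positivity)
  have : (0:ℝ) ≤ (k:ℝ) := k.cast_nonneg
  nlinarith [pow_nonneg hx k]

lemma tsum_m2' {x : ℝ} (hx : 0 ≤ x) :
    (∑' k : ℕ, (k:ℝ) * ((k:ℝ) - 1) * x^k / k.factorial) = x^2 * Real.exp x := by
  have hs := summable_m2' hx
  rw [Summable.tsum_eq_zero_add hs, Summable.tsum_eq_zero_add ((summable_nat_add_iff 1).2 hs)]
  have h : ∀ k : ℕ, ((k+1+1 : ℕ):ℝ) * (((k+1+1:ℕ):ℝ) - 1) * x^(k+1+1) / (k+1+1).factorial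
      = x^2 * (x^k / k.factorial) := by
    intro k
    rw [Nat.factorial_succ, Nat.factorial_succ]
    have h1 := fac_ne k
    push_cast
    field_simp
    ring
  simp only [h]
  rw [tsum_mul_left, tsum_exp]
  norm_num

lemma tsum_m2 {x : ℝ} (hx : 0 ≤ x) :
    (∑' k : ℕ, (k:ℝ)^2 * x^k / k.factorial) = (x^2 + x) * Real.exp x := by
  have h : ∀ k : ℕ, (k:ℝ)^2 * x^k / k.factorial
      = (k:ℝ) * ((k:ℝ) - 1) * x^k / k.factorial + (k:ℝ) * x^k / k.factorial := by
    intro k; field_simp; ring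
  simp only [h]
  rw [Summable.tsum_add (summable_m2' hx) (by simpa using summable_pow_fac 1 hx), tsum_m2' hx, tsum_m1 hx]
  ring

lemma tsum_m4_le : ∃ C : ℝ, 0 ≤ C ∧
    ∀ y : ℝ, 0 ≤ y → (∑' k : ℕ, (k:ℝ)^4 * y^k / k.factorial) ≤ C * Real.exp (2*y) := by
  obtain ⟨C, hC0, hC⟩ := aux_bound 4
  refine ⟨C, hC0, fun y hy => ?_⟩
  have key : ∀ k : ℕ, (k:ℝ)^4 * y^k / k.factorial ≤ C * ((2*y)^k / k.factorial) := by
    intro k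
    have h1 : (k:ℝ)^4 * y^k / k.factorial = ((k:ℝ)^4 * (1/2)^k) * ((2*y)^k / k.factorial) := by
      rw [mul_pow]; field_simp; rw [mul_assoc _ ((1/2:ℝ)^k), ← mul_pow]; norm_num
    rw [h1]
    exact mul_le_mul_of_nonneg_right (hC k) (by positivity)
  calc (∑' k : ℕ, (k:ℝ)^4 * y^k / k.factorial)
      ≤ ∑' k : ℕ, C * ((2*y)^k / k.factorial) :=
        Summable.tsum_le_tsum key (summable_pow_fac 4 hy) ((Real.summable_pow_div_factorial (2*y)).mul_left C)
    _ = C * Real.exp (2*y) := by rw [tsum_mul_left, tsum_exp]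

lemma taylor_rem {δ : ℝ} (hδ : 0 < δ) {φ : ℝ → ℝ}
    (hφ : ContDiffOn ℝ 2 φ (Set.Icc 0 δ)) {ε' : ℝ} (hε' : 0 < ε') :
    ∃ η : ℝ, 0 < η ∧ η ≤ δ ∧ ∀ x : ℝ, 0 ≤ x → x ≤ η →
      |φ x - φ 0 - derivWithin φ (Set.Icc 0 δ) 0 * x
        - derivWithin (derivWithin φ (Set.Icc 0 δ)) (Set.Icc 0 δ) 0 * x^2 / 2|
      ≤ ε' * x^2 := by
  set s : Set ℝ := Set.Icc 0 δ with hs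
  set g : ℝ → ℝ := derivWithin φ s with hgdef
  set h : ℝ → ℝ := derivWithin g s with hhdef
  have hu : UniqueDiffOn ℝ s := uniqueDiffOn_Icc hδ
  have hφ1 : ContDiffOn ℝ 1 g s := hφ.derivWithin hu (by norm_num)
  have hgd : DifferentiableOn ℝ g s := hφ1.differentiableOn one_ne_zero
  have hhc : ContinuousOn h s := (hφ1.derivWithin hu (m := 0) (by norm_num)).continuousOn
  have hφd : DifferentiableOn ℝ φ s := hφ.differentiableOn (by norm_num)
  have h0mem : (0:ℝ) ∈ s := ⟨le_rfl, hδ.le⟩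
  have hcw : ContinuousWithinAt h s 0 := hhc 0 h0mem
  rw [Metric.continuousWithinAt_iff] at hcw
  obtain ⟨η₀, hη₀, hcw⟩ := hcw ε' hε'
  set η : ℝ := min (η₀/2) δ with hηdef
  have hηpos : 0 < η := lt_min (by linarith) hδ
  have hηδ : η ≤ δ := min_le_right _ _
  have hsub : Set.Icc (0:ℝ) η ⊆ s := Set.Icc_subset_Icc le_rfl hηδ
  -- continuity bound
  have hhb : ∀ y ∈ Set.Icc (0:ℝ) η, |h y - h 0| ≤ ε' := by
    intro y hy
    have hys : y ∈ s := hsub hy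
    have : dist y 0 < η₀ := by
      rw [Real.dist_eq, sub_zero, abs_of_nonneg hy.1]
      calc y ≤ η := hy.2
        _ ≤ η₀/2 := min_le_left _ _
        _ < η₀ := by linarith
    have := hcw hys this
    rw [Real.dist_eq] at this
    exact this.le
  -- Step 1
  have key1 : ∀ x ∈ Set.Icc (0:ℝ) η, |g x - g 0 - h 0 * x| ≤ ε' * x := by
    intro x hx
    have hmvt := Convex.norm_image_sub_le_of_norm_hasDerivWithin_le
      (f := fun t => g t - h 0 * t) (f' := fun t => h t - h 0) (s := Set.Icc (0:ℝ) η)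
      (C := ε')
      (fun t ht => by
        have h1 : HasDerivWithinAt g (h t) s t := (hgd t (hsub ht)).hasDerivWithinAt
        have h2 : HasDerivWithinAt (fun u : ℝ => h 0 * u) (h 0) (Set.Icc (0:ℝ) η) t := by
          simpa using (hasDerivWithinAt_id t (Set.Icc (0:ℝ) η)).const_mul (h 0)
        exact (h1.mono hsub).sub h2)
      (fun t ht => by simpa [Real.norm_eq_abs] using hhb t ht)
      (convex_Icc _ _) (Set.left_mem_Icc.2 hηpos.le) hx
    rw [Real.norm_eq_abs, Real.norm_eq_abs, sub_zero, abs_of_nonneg hx.1] at hmvt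
    have : g x - h 0 * x - g 0 = g x - g 0 - h 0 * x := by ring
    simpa [mul_zero, sub_zero, this] using hmvt
  -- Step 2
  refine ⟨η, hηpos, hηδ, fun x hx0 hxη => ?_⟩
  have hxs : Set.Icc (0:ℝ) x ⊆ Set.Icc (0:ℝ) η := Set.Icc_subset_Icc le_rfl hxη
  have hmvt := Convex.norm_image_sub_le_of_norm_hasDerivWithin_le
    (f := fun t => φ t - φ 0 - g 0 * t - h 0 * t^2 / 2)
    (f' := fun t => g t - g 0 - h 0 * t) (s := Set.Icc (0:ℝ) x)
    (C := ε' * x)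
    (fun t ht => by
      have h1 : HasDerivWithinAt φ (g t) (Set.Icc (0:ℝ) x) t :=
        ((hφd t (hsub (hxs ht))).hasDerivWithinAt).mono (hxs.trans hsub)
      have h2 : HasDerivWithinAt (fun u : ℝ => g 0 * u) (g 0) (Set.Icc (0:ℝ) x) t := by
        simpa using (hasDerivWithinAt_id t (Set.Icc (0:ℝ) x)).const_mul (g 0)
      have h3 : HasDerivWithinAt (fun u : ℝ => h 0 * u^2 / 2) (h 0 * t) (Set.Icc (0:ℝ) x) t := by
        have := ((hasDerivWithinAt_pow 2 t (s := Set.Icc (0:ℝ) x)).const_mul (h 0)).div_const 2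
        exact this.congr_deriv (by rw [show (2:ℕ) - 1 = 1 from rfl]; push_cast; ring)
      exact ((h1.sub_const (φ 0)).sub h2).sub h3)
    (fun t ht => by
      have ht' : t ∈ Set.Icc (0:ℝ) η := hxs ht
      have := key1 t ht'
      rw [Real.norm_eq_abs]
      calc |g t - g 0 - h 0 * t| ≤ ε' * t := this
        _ ≤ ε' * x := by nlinarith [ht.2, hε'.le]
      )
    (convex_Icc _ _) (Set.left_mem_Icc.2 hx0) (Set.right_mem_Icc.2 hx0)
  rw [Real.norm_eq_abs, Real.norm_eq_abs, sub_zero, abs_of_nonneg hx0] at hmvt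
  calc |φ x - φ 0 - g 0 * x - h 0 * x^2 / 2|
      = |(φ x - φ 0 - g 0 * x - h 0 * x^2/2) - (φ 0 - φ 0 - g 0 * 0 - h 0 * 0^2/2)| := by
        norm_num
    _ ≤ ε' * x * x := hmvt
    _ = ε' * x^2 := by ring

set_option maxHeartbeats 2000000 in
/-- Boundary-layer slice expansion (key step in Theorem 3.1): for `φ` bounded by 1 and C²
on `[0,δ]`, `E[φ(K_λ/m)] − φ(λ/m) = (λ/(2m²))·φ''(0) + o(m⁻²)` uniformly in `λ ∈ [0,L]`,
the expectation over `K_λ ~ Poi(λ)` being written as a sum against Poisson weights. -/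
theorem poisson_boundary_slice_expansion
    (L δ : ℝ) (hL : 0 < L) (hδ : 0 < δ)
    (φ : ℝ → ℝ) (hφb : ∀ t : ℝ, 0 ≤ t → |φ t| ≤ 1)
    (hφ : ContDiffOn ℝ 2 φ (Set.Icc 0 δ)) :
    ∀ ε > 0, ∃ M : ℕ, ∀ m : ℕ, M ≤ m → ∀ lam ∈ Set.Icc (0:ℝ) L,
      |(∑' k : ℕ, φ ((k : ℝ) / (m : ℝ)) * (Real.exp (-lam) * lam ^ k / Nat.factorial k))
          - φ (lam / (m : ℝ))
          - (lam / (2 * (m : ℝ) ^ 2)) *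
              derivWithin (fun t => derivWithin φ (Set.Icc (0:ℝ) δ) t) (Set.Icc (0:ℝ) δ) 0|
        ≤ ε * ((m : ℝ) ^ 2)⁻¹ := by
  intro ε hε
  set g0 : ℝ := derivWithin φ (Set.Icc (0:ℝ) δ) 0 with hg0
  set h0 : ℝ := derivWithin (derivWithin φ (Set.Icc (0:ℝ) δ)) (Set.Icc (0:ℝ) δ) 0 with hh0
  set ε' : ℝ := ε / (4*L^2 + 2*L + 2) with hε'def
  have hε' : 0 < ε' := by
    apply div_pos hε; linarith [sq_nonneg L]
  obtain ⟨η, hη, hηδ, hrem⟩ := taylor_rem hδ hφ hε'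
  obtain ⟨C4, hC40, hC4⟩ := tsum_m4_le
  set A : ℝ := 2/η^4 + |g0|/η^3 + |h0|/(2*η^2) with hA
  have hA0 : 0 ≤ A := by positivity
  obtain ⟨M, hM⟩ := exists_nat_ge (max (L/η) (2*A*C4*Real.exp L/ε + 1))
  refine ⟨max M 1, fun m hm lam hlam => ?_⟩
  obtain ⟨hl0, hlL⟩ := hlam
  have hm1 : 1 ≤ m := le_trans (le_max_right _ _) hm
  have hmM : (M:ℝ) ≤ (m:ℝ) := by exact_mod_cast le_trans (le_max_left _ _) hm
  set mR : ℝ := (m:ℝ) with hmR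
  have hmR1 : 1 ≤ mR := by rw [hmR]; exact_mod_cast hm1
  have hmRpos : 0 < mR := by linarith
  have hMb := hM
  have hMm : max (L/η) (2*A*C4*Real.exp L/ε + 1) ≤ mR := le_trans hM hmM
  have hLη : L/η ≤ mR := le_trans (le_max_left _ _) hMm
  have hACε : 2*A*C4*Real.exp L/ε + 1 ≤ mR := le_trans (le_max_right _ _) hMm
  set p : ℕ → ℝ := fun k => Real.exp (-lam) * lam ^ k / (Nat.factorial k : ℝ) with hp
  have hp0 : ∀ k, 0 ≤ p k := fun k => by positivity
  have hpj : ∀ j : ℕ, Summable (fun k : ℕ => (k:ℝ)^j * p k) := by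
    intro j
    have := (summable_pow_fac j hl0).mul_left (Real.exp (-lam))
    refine this.congr fun k => ?_
    simp only [hp]; ring
  have hpsum : Summable p := by
    have := hpj 0
    simpa using this
  have hp1' : Summable (fun k : ℕ => (k:ℝ) * p k) := by
    have := hpj 1; simpa using this
  have hφp : Summable (fun k : ℕ => φ ((k:ℝ)/mR) * p k) := by
    refine Summable.of_norm_bounded hpsum (fun k => ?_)
    rw [Real.norm_eq_abs, abs_mul, abs_of_nonneg (hp0 k)]
    exact mul_le_of_le_one_left (hp0 k) (hφb ((k:ℝ)/mR) (by positivity))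
  -- moment identities
  have expne : Real.exp (-lam) * Real.exp lam = 1 := by
    rw [← Real.exp_add]; simp
  have Sp0 : (∑' k : ℕ, p k) = 1 := by
    have : (∑' k : ℕ, p k) = Real.exp (-lam) * ∑' k : ℕ, lam^k / k.factorial := by
      rw [← tsum_mul_left]; congr 1; funext k; simp only [hp]; ring
    rw [this, tsum_exp, expne]
  have Sp1 : (∑' k : ℕ, (k:ℝ) * p k) = lam := by
    have : (∑' k : ℕ, (k:ℝ) * p k)
        = Real.exp (-lam) * ∑' k : ℕ, (k:ℝ) * lam^k / k.factorial := by
      rw [← tsum_mul_left]; congr 1; funext k; simp only [hp]; ring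
    rw [this, tsum_m1 hl0]
    calc Real.exp (-lam) * (lam * Real.exp lam) = lam * (Real.exp (-lam) * Real.exp lam) := by ring
      _ = lam := by rw [expne]; ring
  have Sp2 : (∑' k : ℕ, (k:ℝ)^2 * p k) = lam^2 + lam := by
    have : (∑' k : ℕ, (k:ℝ)^2 * p k)
        = Real.exp (-lam) * ∑' k : ℕ, (k:ℝ)^2 * lam^k / k.factorial := by
      rw [← tsum_mul_left]; congr 1; funext k; simp only [hp]; ring
    rw [this, tsum_m2 hl0]
    calc Real.exp (-lam) * ((lam^2 + lam) * Real.exp lam)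
        = (lam^2 + lam) * (Real.exp (-lam) * Real.exp lam) := by ring
      _ = lam^2 + lam := by rw [expne]; ring
  have Sp4 : (∑' k : ℕ, (k:ℝ)^4 * p k) ≤ C4 * Real.exp L := by
    have h1 : (∑' k : ℕ, (k:ℝ)^4 * p k)
        = Real.exp (-lam) * ∑' k : ℕ, (k:ℝ)^4 * lam^k / k.factorial := by
      rw [← tsum_mul_left]; congr 1; funext k; simp only [hp]; ring
    rw [h1]
    calc Real.exp (-lam) * ∑' k : ℕ, (k:ℝ)^4 * lam^k / k.factorial
        ≤ Real.exp (-lam) * (C4 * Real.exp (2*lam)) := by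
          apply mul_le_mul_of_nonneg_left (hC4 lam hl0) (Real.exp_nonneg _)
      _ = C4 * Real.exp (-lam + 2*lam) := by rw [Real.exp_add]; ring
      _ = C4 * Real.exp lam := by rw [show -lam + 2*lam = lam by ring]
      _ ≤ C4 * Real.exp L := by
          apply mul_le_mul_of_nonneg_left (Real.exp_le_exp.2 hlL) hC40
  -- the error terms
  set e : ℕ → ℝ := fun k => (φ ((k:ℝ)/mR) - φ 0 - g0 * ((k:ℝ)/mR) - h0 * ((k:ℝ)/mR)^2/2) * p k
    with he
  have hedecomp : ∀ k : ℕ, e k = φ ((k:ℝ)/mR) * p k - (φ 0) * p k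
      - (g0/mR) * ((k:ℝ) * p k) - (h0/(2*mR^2)) * ((k:ℝ)^2 * p k) := by
    intro k
    simp only [he]
    field_simp
  have hesum : Summable e := by
    rw [show e = fun k : ℕ => φ ((k:ℝ)/mR) * p k - (φ 0) * p k
      - (g0/mR) * ((k:ℝ) * p k) - (h0/(2*mR^2)) * ((k:ℝ)^2 * p k) from funext hedecomp]
    exact ((hφp.sub (hpsum.mul_left _)).sub (hp1'.mul_left _)).sub ((hpj 2).mul_left _)
  have Etsum : (∑' k, e k) = (∑' k : ℕ, φ ((k:ℝ)/mR) * p k)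
      - φ 0 - g0 * lam / mR - h0 * (lam^2 + lam) / (2*mR^2) := by
    rw [show e = fun k : ℕ => φ ((k:ℝ)/mR) * p k - (φ 0) * p k
      - (g0/mR) * ((k:ℝ) * p k) - (h0/(2*mR^2)) * ((k:ℝ)^2 * p k) from funext hedecomp]
    rw [Summable.tsum_sub ((hφp.sub (hpsum.mul_left _)).sub (hp1'.mul_left _)) ((hpj 2).mul_left _),
      Summable.tsum_sub (hφp.sub (hpsum.mul_left _)) (hp1'.mul_left _),
      Summable.tsum_sub hφp (hpsum.mul_left _)]
    rw [tsum_mul_left, tsum_mul_left, tsum_mul_left, Sp0, Sp1, Sp2]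
    ring
  -- remainder at lam/mR
  have hLm : L ≤ mR * η := (div_le_iff₀ hη).1 hLη
  have hlmη : lam/mR ≤ η := by
    rw [div_le_iff₀ hmRpos]
    linarith
  have hr := hrem (lam/mR) (by positivity) hlmη
  set r : ℝ := φ (lam/mR) - φ 0 - g0 * (lam/mR) - h0 * (lam/mR)^2/2 with hrdef
  have hrb : |r| ≤ ε' * L^2 / mR^2 := by
    refine le_trans hr ?_
    rw [div_pow, mul_div_assoc]
    apply mul_le_mul_of_nonneg_left ?_ hε'.le
    apply div_le_div_of_nonneg_right ?_ (by positivity)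
    exact pow_le_pow_left₀ hl0 hlL 2
  have hT : (∑' k : ℕ, φ ((k:ℝ)/mR) * p k) - φ (lam/mR) - (lam/(2*mR^2)) * h0
      = (∑' k, e k) - r := by
    rw [Etsum, hrdef]
    ring
  -- per-term bound
  have hek : ∀ k : ℕ, |e k| ≤ (ε'/mR^2) * ((k:ℝ)^2 * p k) + (A/mR^4) * ((k:ℝ)^4 * p k) := by
    intro k
    set x : ℝ := (k:ℝ)/mR with hx
    have hx0 : 0 ≤ x := by positivity
    have hRHS : (ε'/mR^2) * ((k:ℝ)^2 * p k) + (A/mR^4) * ((k:ℝ)^4 * p k)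
        = (ε' * x^2 + A * x^4) * p k := by
      rw [hx]
      field_simp
    rw [hRHS, he]
    simp only []
    rw [abs_mul, abs_of_nonneg (hp0 k)]
    apply mul_le_mul_of_nonneg_right ?_ (hp0 k)
    by_cases hxη : x ≤ η
    · refine le_trans (hrem x hx0 hxη) ?_
      linarith [mul_nonneg hA0 (pow_nonneg hx0 4)]
    · push_neg at hxη
      have b1 := abs_le.1 (hφb x hx0)
      have b2 := abs_le.1 (hφb 0 le_rfl)
      have m1 := mul_le_mul_of_nonneg_right (le_abs_self g0) hx0
      have m2 := mul_le_mul_of_nonneg_right (neg_abs_le g0) hx0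
      have m3 := mul_le_mul_of_nonneg_right (le_abs_self h0) (sq_nonneg x)
      have m4 := mul_le_mul_of_nonneg_right (neg_abs_le h0) (sq_nonneg x)
      have step1 : |φ x - φ 0 - g0 * x - h0 * x^2/2| ≤ 2 + |g0| * x + |h0| * x^2/2 := by
        apply abs_le.2
        constructor <;> [linarith [b1.1, b2.2, m2, m4]; linarith [b1.2, b2.1, m1, m3]]
      refine le_trans step1 ?_
      have hx2 : η^2 ≤ x^2 := pow_le_pow_left₀ hη.le hxη.le 2
      have hx3 : η^3 ≤ x^3 := pow_le_pow_left₀ hη.le hxη.le 3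
      have hx4 : η^4 ≤ x^4 := pow_le_pow_left₀ hη.le hxη.le 4
      have i1 : 2 ≤ 2/η^4 * x^4 := by
        rw [div_mul_eq_mul_div, le_div_iff₀ (by positivity)]
        linarith
      have i2 : |g0| * x ≤ |g0|/η^3 * x^4 := by
        rw [div_mul_eq_mul_div, le_div_iff₀ (by positivity)]
        linarith [mul_le_mul_of_nonneg_left (mul_le_mul_of_nonneg_left hx3 hx0) (abs_nonneg g0)]
      have i3 : |h0| * x^2/2 ≤ |h0|/(2*η^2) * x^4 := by
        rw [div_mul_eq_mul_div, le_div_iff₀ (by positivity)]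
        linarith [mul_le_mul_of_nonneg_left (mul_le_mul_of_nonneg_left hx2 (sq_nonneg x)) (abs_nonneg h0)]
      have hAx : A * x^4 = 2/η^4 * x^4 + |g0|/η^3 * x^4 + |h0|/(2*η^2) * x^4 := by
        rw [hA]; ring
      linarith [mul_nonneg hε'.le (sq_nonneg x), i1, i2, i3, hAx]
  -- sum the bounds
  have hbsum : Summable (fun k : ℕ => (ε'/mR^2) * ((k:ℝ)^2 * p k) + (A/mR^4) * ((k:ℝ)^4 * p k)) :=
    ((hpj 2).mul_left _).add ((hpj 4).mul_left _)
  have habs : Summable (fun k : ℕ => |e k|) :=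
    Summable.of_nonneg_of_le (fun k => abs_nonneg _) hek hbsum
  have h1 : |∑' k, e k| ≤ ∑' k, |e k| := by
    simpa [Real.norm_eq_abs] using norm_tsum_le_tsum_norm (f := e)
      (by simpa [Real.norm_eq_abs] using habs)
  have h2 : (∑' k, |e k|) ≤ ∑' k : ℕ, ((ε'/mR^2) * ((k:ℝ)^2 * p k) + (A/mR^4) * ((k:ℝ)^4 * p k)) :=
    Summable.tsum_le_tsum hek habs hbsum
  have h3 : (∑' k : ℕ, ((ε'/mR^2) * ((k:ℝ)^2 * p k) + (A/mR^4) * ((k:ℝ)^4 * p k)))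
      = (ε'/mR^2)*(lam^2+lam) + (A/mR^4) * (∑' k : ℕ, (k:ℝ)^4 * p k) := by
    rw [Summable.tsum_add ((hpj 2).mul_left _) ((hpj 4).mul_left _), tsum_mul_left, tsum_mul_left, Sp2]
  have h4 : (A/mR^4) * (∑' k : ℕ, (k:ℝ)^4 * p k) ≤ (A/mR^4) * (C4 * Real.exp L) :=
    mul_le_mul_of_nonneg_left Sp4 (by positivity)
  have hEb : |∑' k, e k| ≤ (ε'/mR^2)*(L^2+L) + (A/mR^4) * (C4 * Real.exp L) := by
    have h5 : (ε'/mR^2)*(lam^2+lam) ≤ (ε'/mR^2)*(L^2+L) := by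
      apply mul_le_mul_of_nonneg_left ?_ (by positivity)
      have := pow_le_pow_left₀ hl0 hlL 2
      linarith
    rw [h3] at h2
    linarith [h1, h2, h4, h5]
  -- final assembly
  have part1 : ε' * (2*L^2+L) ≤ ε/2 := by
    rw [hε'def, div_mul_eq_mul_div, div_le_div_iff₀ (by linarith [sq_nonneg L]) (by norm_num)]
    have key : ((2*L^2+L) * 2 : ℝ) ≤ 4*L^2+2*L+2 := by linarith
    have := mul_le_mul_of_nonneg_left key hε.le
    linarith
  have hmm2 : mR ≤ mR^2 := by
    have := mul_le_mul_of_nonneg_right hmR1 (by linarith : (0:ℝ) ≤ mR)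
    calc mR = 1 * mR := (one_mul mR).symm
      _ ≤ mR * mR := this
      _ = mR^2 := (sq mR).symm
  have part2 : A * C4 * Real.exp L / mR^2 ≤ ε/2 := by
    rw [div_le_div_iff₀ (pow_pos hmRpos 2) (by norm_num)]
    have k1 : 2*A*C4*Real.exp L/ε ≤ mR^2 := by linarith
    have k2 : 2*A*C4*Real.exp L ≤ ε * mR^2 := by
      rw [div_le_iff₀ hε] at k1
      linarith
    linarith
  calc |(∑' k : ℕ, φ ((k:ℝ)/mR) * p k) - φ (lam/mR) - (lam/(2*mR^2)) * h0|
      = |(∑' k, e k) - r| := by rw [hT]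
    _ ≤ |∑' k, e k| + |r| := by
        rw [sub_eq_add_neg]
        exact (abs_add_le _ _).trans (by rw [abs_neg])
    _ ≤ (ε'/mR^2)*(L^2+L) + (A/mR^4) * (C4 * Real.exp L) + ε' * L^2 / mR^2 := by
        linarith [hEb, hrb]
    _ = (ε' * (2*L^2+L) + (A * C4 * Real.exp L)/mR^2) / mR^2 := by
        field_simp
        ring
    _ ≤ (ε/2 + ε/2) / mR^2 := by
        have hd : (0:ℝ) < mR^2 := pow_pos hmRpos 2
        apply (div_le_div_iff_of_pos_right hd).2
        linarith [part1, part2]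
    _ = ε * (mR^2)⁻¹ := by
        field_simp
        norm_num
end
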